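/- arXiv:1104.1442 — 3 statements merged into one kernel-verified Lean document; each statement's English description precedes it below -/
import Mathlib

section
/- Let (Σ_A, T) be a topologically mixing subshift of finite type, Ψ ∈ C_aa^−(Σ_A,T) and Φ ∈ C_aa(Σ_A,T,d); dimensions are computed in the metric space (Σ_A, d_Ψ). For any compact set Ω ⊂ L_Φ, the packing dimension of E_Φ(Ω) := ∪_{α∈Ω} E_Φ(α) satisfies dim_P E_Φ(Ω) ≤ sup{Λ(α) : α ∈ Ω}. In particular, for every α ∈ L_Φ, dim_H E_Φ(α) ≤ dim_P E_Φ(α) ≤ Λ(α). -/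
open Filter Topology MeasureTheory Set
open scoped ENNReal NNReal

namespace AlmostAdditivePaper

variable {m : ℕ}

/-- The one-sided subshift of finite type determined by a transition matrix `A`
(with entries `0`/`1`). -/
abbrev Subshift (A : Matrix (Fin m) (Fin m) ℕ) : Type :=
  {x : ℕ → Fin m // ∀ n, A (x n) (x (n + 1)) = 1}

/-- The left shift map `T`. -/
def shiftT (A : Matrix (Fin m) (Fin m) ℕ) : Subshift A → Subshift A :=
  fun x => ⟨fun n => x.1 (n + 1), fun n => x.2 (n + 1)⟩

/-- `A` is a 0-1 matrix with `A ^ p₀ > 0` entrywise for some `p₀ ≥ 1`: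
the subshift `Σ_A` is topologically mixing. -/
def Mixing (A : Matrix (Fin m) (Fin m) ℕ) : Prop :=
  (∀ i j, A i j = 0 ∨ A i j = 1) ∧ ∃ p₀ : ℕ, 0 < p₀ ∧ ∀ i j, 0 < (A ^ p₀) i j

/-- Scalar almost additive potential `Φ = (φ_n)_{n ≥ 1}` with constant `C = C(Φ)`;
we use the convention `φ₀ = 0`. -/
structure AlmostAdditive (A : Matrix (Fin m) (Fin m) ℕ)
    (Φ : ℕ → Subshift A → ℝ) (C : ℝ) : Prop where
  posC : 0 < C
  cont : ∀ n, Continuous (Φ n)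
  zero : ∀ x, Φ 0 x = 0
  upper : ∀ n p x, Φ (n + p) x ≤ Φ n x + Φ p ((shiftT A)^[n] x) + C
  lower : ∀ n p x, Φ n x + Φ p ((shiftT A)^[n] x) - C ≤ Φ (n + p) x

/-- Vector-valued almost additive potential: each component is almost additive,
with constant `C j` for the `j`-th component. -/
def AlmostAdditiveVec {d : ℕ} (A : Matrix (Fin m) (Fin m) ℕ)
    (Φ : ℕ → Subshift A → EuclideanSpace ℝ (Fin d)) (C : Fin d → ℝ) : Prop :=
  ∀ j : Fin d, AlmostAdditive A (fun n x => Φ n x j) (C j)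

/-- The cylinder `[w]` of a word `w`. -/
def cyl (A : Matrix (Fin m) (Fin m) ℕ) (w : List (Fin m)) : Set (Subshift A) :=
  {x | ∀ i : Fin w.length, x.1 i.1 = w.get i}

/-- The word `w` is admissible. -/
def AdmWord (A : Matrix (Fin m) (Fin m) ℕ) (w : List (Fin m)) : Prop :=
  ∀ i : ℕ, (h : i + 1 < w.length) → A (w.get ⟨i, by omega⟩) (w.get ⟨i + 1, h⟩) = 1

/-- `x|_n`, the prefix of length `n` of `x ∈ Σ_A`. -/
def wordPrefix {A : Matrix (Fin m) (Fin m) ℕ} (x : Subshift A) (n : ℕ) : List (Fin m) :=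
  List.ofFn fun i : Fin n => x.1 i

/-- `Φ[w] := sup {exp (φ_{|w|}(x)) : x ∈ [w]}`. -/
noncomputable def wordSup (A : Matrix (Fin m) (Fin m) ℕ) (Φ : ℕ → Subshift A → ℝ)
    (w : List (Fin m)) : ℝ :=
  sSup ((fun x => Real.exp (Φ w.length x)) '' cyl A w)

/-- The distance `d_Ψ(x,y) = Ψ[x ∧ y]` associated with a potential `Ψ`. -/
noncomputable def dPsi (A : Matrix (Fin m) (Fin m) ℕ) (Ψ : ℕ → Subshift A → ℝ)
    (x y : Subshift A) : ℝ :=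
  letI := Classical.dec (x = y)
  if h : x = y then 0
  else wordSup A Ψ (wordPrefix x (Nat.find (show ∃ n, x.1 n ≠ y.1 n by
    by_contra hc
    push_neg at hc
    exact h (Subtype.ext (funext hc)))))

/-- The closed ball of center `x` and radius `r` for `d_Ψ`. -/
def ballD (A : Matrix (Fin m) (Fin m) ℕ) (Ψ : ℕ → Subshift A → ℝ)
    (x : Subshift A) (r : ℝ) : Set (Subshift A) :=
  {y | dPsi A Ψ x y ≤ r}

/-- `B_t(Ψ)`: words whose cylinder is a closed ball of radius `e^{-t}` in `(Σ_A, d_Ψ)`. -/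
def Bn (A : Matrix (Fin m) (Fin m) ℕ) (Ψ : ℕ → Subshift A → ℝ) (t : ℝ) :
    Set (List (Fin m)) :=
  {w | ∃ x, cyl A w = ballD A Ψ x (Real.exp (-t))}

variable {E : Type*} [NormedAddCommGroup E] [NormedSpace ℝ E]

/-- `‖φ‖_n := sup {|φ(x) − φ(y)| : x|_n = y|_n}`. -/
noncomputable def varN (A : Matrix (Fin m) (Fin m) ℕ) (φ : Subshift A → E) (n : ℕ) : ℝ :=
  sSup {r | ∃ x y : Subshift A, wordPrefix x n = wordPrefix y n ∧ r = ‖φ x - φ y‖}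

/-- The sup norm `‖φ‖_∞`. -/
noncomputable def supNorm (A : Matrix (Fin m) (Fin m) ℕ) (φ : Subshift A → E) : ℝ :=
  sSup (Set.range fun x => ‖φ x‖)

/-- `‖Φ − Θ‖_lim := limsup_n ‖φ_n − θ_n‖_∞ / n`. -/
noncomputable def limNorm (A : Matrix (Fin m) (Fin m) ℕ) (Φ Θ : ℕ → Subshift A → E) : ℝ :=
  Filter.limsup (fun n : ℕ => supNorm A (fun x => Φ n x - Θ n x) / n) atTop

/-- `Φ_max := max φ₁ + C(Φ)`. -/
noncomputable def PhiMax (A : Matrix (Fin m) (Fin m) ℕ) (Φ : ℕ → Subshift A → ℝ)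
    (C : ℝ) : ℝ :=
  sSup (Set.range (Φ 1)) + C

/-- `Φ_min := min φ₁ − C(Φ)`. -/
noncomputable def PhiMin (A : Matrix (Fin m) (Fin m) ℕ) (Φ : ℕ → Subshift A → ℝ)
    (C : ℝ) : ℝ :=
  sInf (Set.range (Φ 1)) - C

/-- `‖Φ‖ := |Φ_max| ∨ |Φ_min|`. -/
noncomputable def PhiNorm (A : Matrix (Fin m) (Fin m) ℕ) (Φ : ℕ → Subshift A → ℝ)
    (C : ℝ) : ℝ :=
  max |PhiMax A Φ C| |PhiMin A Φ C|

/-- `μ` is a `T`-invariant Borel probability measure. -/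
def InvMeasure (A : Matrix (Fin m) (Fin m) ℕ) (μ : Measure (Subshift A)) : Prop :=
  IsProbabilityMeasure μ ∧ μ.map (shiftT A) = μ

/-- `L_Φ = {Φ_*(μ) : μ ∈ M(Σ_A,T)}`, where `Φ_*(μ) = lim_n (1/n) ∫ φ_n dμ`. -/
def LPhi (A : Matrix (Fin m) (Fin m) ℕ) (Φ : ℕ → Subshift A → E) : Set E :=
  {α | ∃ μ : Measure (Subshift A), InvMeasure A μ ∧
      Tendsto (fun n : ℕ => (n : ℝ)⁻¹ • ∫ x, Φ n x ∂μ) atTop (𝓝 α)}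

/-- `Φ_*(μ) = lim_n (1/n) ∫ φ_n dμ`. -/
noncomputable def potStar (A : Matrix (Fin m) (Fin m) ℕ) (Φ : ℕ → Subshift A → E)
    (μ : Measure (Subshift A)) : E :=
  limUnder atTop fun n : ℕ => (n : ℝ)⁻¹ • ∫ x, Φ n x ∂μ

/-- Entropy of the partition of `Σ_A` into cylinders of length `n`. -/
noncomputable def cylEnt (A : Matrix (Fin m) (Fin m) ℕ) (μ : Measure (Subshift A))
    (n : ℕ) : ℝ :=
  ∑ w : Fin n → Fin m, Real.negMulLog ((μ (cyl A (List.ofFn w))).toReal)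

/-- The measure-theoretic (Kolmogorov–Sinai) entropy `h_μ(T)`, computed through the
natural generating partition into cylinders. -/
noncomputable def entKS (A : Matrix (Fin m) (Fin m) ℕ) (μ : Measure (Subshift A)) : ℝ :=
  limUnder atTop fun n : ℕ => cylEnt A μ n / n

/-- The level set `E_Φ(α) = {x : lim_n φ_n(x)/n = α}`. -/
def EPhi (A : Matrix (Fin m) (Fin m) ℕ) (Φ : ℕ → Subshift A → E) (α : E) :
    Set (Subshift A) :=
  {x | Tendsto (fun n : ℕ => (n : ℝ)⁻¹ • Φ n x) atTop (𝓝 α)}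

/-- The localized level set `E_Φ(ξ) = {x : lim_n φ_n(x)/n = ξ(x)}`. -/
def EPhiXi (A : Matrix (Fin m) (Fin m) ℕ) (Φ : ℕ → Subshift A → E)
    (ξ : Subshift A → E) : Set (Subshift A) :=
  {x | Tendsto (fun n : ℕ => (n : ℝ)⁻¹ • Φ n x) atTop (𝓝 (ξ x))}

/-- `F(α,t,ε,Φ,Ψ)`. -/
def Fset (A : Matrix (Fin m) (Fin m) ℕ) (Φ : ℕ → Subshift A → E)
    (Ψ : ℕ → Subshift A → ℝ) (α : E) (t ε : ℝ) : Set (List (Fin m)) :=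
  {u | u ∈ Bn A Ψ t ∧ ∃ x ∈ cyl A u, ‖(u.length : ℝ)⁻¹ • Φ u.length x - α‖ < ε}

/-- `f(α,t,ε,Φ,Ψ) = # F(α,t,ε,Φ,Ψ)`. -/
noncomputable def fcard (A : Matrix (Fin m) (Fin m) ℕ) (Φ : ℕ → Subshift A → E)
    (Ψ : ℕ → Subshift A → ℝ) (α : E) (t ε : ℝ) : ℕ :=
  Nat.card (Fset A Φ Ψ α t ε)

/-- The large deviation spectrum
`Λ(α) = lim_{ε → 0⁺} limsup_n log f(α,n,ε) / n`. -/
noncomputable def LambdaD (A : Matrix (Fin m) (Fin m) ℕ) (Φ : ℕ → Subshift A → E)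
    (Ψ : ℕ → Subshift A → ℝ) (α : E) : ℝ :=
  limUnder (𝓝[>] (0 : ℝ)) fun ε : ℝ =>
    Filter.limsup (fun n : ℕ => Real.log (fcard A Φ Ψ α n ε) / n) atTop

/-- `D(Ψ) = lim_n log (# B_n(Ψ)) / n`. -/
noncomputable def DPsi (A : Matrix (Fin m) (Fin m) ℕ) (Ψ : ℕ → Subshift A → ℝ) : ℝ :=
  limUnder atTop fun n : ℕ => Real.log (Nat.card (Bn A Ψ (n : ℝ))) / n

/-- The conditional variational principle quantity
`E(α) = sup {h_μ(T)/(-Ψ_*(μ)) : μ invariant, Φ_*(μ) = α}`. -/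
noncomputable def EEsup (A : Matrix (Fin m) (Fin m) ℕ) (Φ : ℕ → Subshift A → E)
    (Ψ : ℕ → Subshift A → ℝ) (α : E) : ℝ :=
  sSup {r | ∃ μ : Measure (Subshift A), InvMeasure A μ ∧ potStar A Φ μ = α ∧
    r = entKS A μ / (-(potStar A Ψ μ))}

/-! ### Dimensions relative to a distance function `ρ` -/

/-- Diameter of a set, relative to a distance function `ρ`. -/
noncomputable def setDiam {X : Type*} (ρ : X → X → ℝ) (U : Set X) : ℝ≥0∞ :=
  ⨆ x ∈ U, ⨆ y ∈ U, ENNReal.ofReal (ρ x y)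

/-- `s`-dimensional Hausdorff measure relative to `ρ`. -/
noncomputable def hMeasD {X : Type*} (ρ : X → X → ℝ) (s : ℝ) (e : Set X) : ℝ≥0∞ :=
  ⨆ (δ : ℝ) (_ : 0 < δ),
    ⨅ (U : ℕ → Set X) (_ : e ⊆ ⋃ n, U n) (_ : ∀ n, setDiam ρ (U n) ≤ ENNReal.ofReal δ),
      ∑' n, setDiam ρ (U n) ^ s

/-- Hausdorff dimension relative to `ρ`. -/
noncomputable def hdimD {X : Type*} (ρ : X → X → ℝ) (e : Set X) : ℝ≥0∞ :=
  ⨆ (s : ℝ≥0) (_ : hMeasD ρ (s : ℝ) e = ⊤), (s : ℝ≥0∞)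

/-- Minimal number of sets of diameter `≤ δ` needed to cover `e` (relative to `ρ`). -/
noncomputable def coverNum {X : Type*} (ρ : X → X → ℝ) (e : Set X) (δ : ℝ) : ℕ :=
  sInf {k : ℕ | ∃ U : Fin k → Set X, e ⊆ ⋃ i, U i ∧ ∀ i, setDiam ρ (U i) ≤ ENNReal.ofReal δ}

/-- Upper box-counting dimension relative to `ρ`. -/
noncomputable def uboxD {X : Type*} (ρ : X → X → ℝ) (e : Set X) : ℝ≥0∞ :=
  Filter.limsup (fun n : ℕ =>
    ENNReal.ofReal (Real.log (coverNum ρ e (Real.exp (-(n : ℝ)))) / n)) atTop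

/-- Lower box-counting dimension relative to `ρ`. -/
noncomputable def lboxD {X : Type*} (ρ : X → X → ℝ) (e : Set X) : ℝ≥0∞ :=
  Filter.liminf (fun n : ℕ =>
    ENNReal.ofReal (Real.log (coverNum ρ e (Real.exp (-(n : ℝ)))) / n)) atTop

/-- Packing dimension relative to `ρ` (via the modified upper box dimension). -/
noncomputable def pdimD {X : Type*} (ρ : X → X → ℝ) (e : Set X) : ℝ≥0∞ :=
  ⨅ (F : ℕ → Set X) (_ : e ⊆ ⋃ n, F n), ⨆ n, uboxD ρ (F n)

/-! ### Weak concavity and cone points -/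

/-- `h` is weakly concave on the convex set `s`. -/
def WeaklyConcaveOn {V : Type*} [AddCommGroup V] [Module ℝ V] (s : Set V) (h : V → ℝ) :
    Prop :=
  ∃ c : ℝ, 1 ≤ c ∧ ∀ α ∈ s, ∀ β ∈ s, ∃ γ₁ ∈ Set.Icc c⁻¹ c, ∃ γ₂ ∈ Set.Icc c⁻¹ c,
    ∀ l ∈ Set.Icc (0 : ℝ) 1,
      l * h α + (1 - l) * h β ≤
        h ((l * γ₁ + (1 - l) * γ₂)⁻¹ • ((l * γ₁) • α + ((1 - l) * γ₂) • β))

/-- `x` is an `ε`-cone point of `s`. -/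
def IsConePoint {V : Type*} [NormedAddCommGroup V] [NormedSpace ℝ V] (s : Set V)
    (x : V) (ε : ℝ) : Prop :=
  ∀ y ∈ s ∩ Metric.ball x ε, y ≠ x → segment ℝ x (x + (ε / ‖y - x‖) • (y - x)) ⊆ s

/-- `x` is a local cone point of `s`. -/
def IsLocalConePoint {V : Type*} [NormedAddCommGroup V] [NormedSpace ℝ V] (s : Set V)
    (x : V) : Prop :=
  ∃ ε > 0, IsConePoint s x ε


variable {A : Matrix (Fin m) (Fin m) ℕ}

instance : CompactSpace (Subshift A) := by
  have h : IsClosed {x : ℕ → Fin m | ∀ n, A (x n) (x (n + 1)) = 1} := by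
    have : {x : ℕ → Fin m | ∀ n, A (x n) (x (n + 1)) = 1}
        = ⋂ n, {x : ℕ → Fin m | A (x n) (x (n + 1)) = 1} := by
      ext x; simp
    rw [this]
    refine isClosed_iInter fun n => ?_
    have hc : Continuous fun x : ℕ → Fin m => (x n, x (n+1)) :=
      (continuous_apply n).prodMk (continuous_apply (n+1))
    exact (Set.toFinite {p : Fin m × Fin m | A p.1 p.2 = 1}).isClosed.preimage hc
  exact isCompact_iff_compactSpace.mp h.isCompact

lemma isClosed_cyl (w : List (Fin m)) : IsClosed (cyl A w) := by
  have : cyl A w = ⋂ i : Fin w.length, {x : Subshift A | x.1 i.1 = w.get i} := by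
    ext x; simp [cyl]
  rw [this]
  refine isClosed_iInter fun i => ?_
  exact isClosed_eq ((continuous_apply (i:ℕ)).comp continuous_subtype_val) continuous_const

lemma isCompact_cyl (w : List (Fin m)) : IsCompact (cyl A w) :=
  (isClosed_cyl w).isCompact

@[simp] lemma length_wordPrefix (x : Subshift A) (k : ℕ) : (wordPrefix x k).length = k := by
  simp [wordPrefix]

lemma mem_cyl_prefix {x y : Subshift A} {k : ℕ} :
    y ∈ cyl A (wordPrefix x k) ↔ ∀ i < k, y.1 i = x.1 i := by
  constructor
  · intro h i hi
    have := h ⟨i, by simpa using hi⟩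
    simpa [wordPrefix, List.get_ofFn] using this
  · intro h i
    have hi : (i : ℕ) < k := by have := i.2; simpa using this
    exact (h i hi).trans (List.get_ofFn (fun j : Fin k => x.1 j) i).symm

lemma self_mem_cyl_prefix (x : Subshift A) (k : ℕ) : x ∈ cyl A (wordPrefix x k) :=
  mem_cyl_prefix.mpr fun _ _ => rfl

lemma wordPrefix_eq_of_mem {x y : Subshift A} {k : ℕ}
    (h : y ∈ cyl A (wordPrefix x k)) : wordPrefix y k = wordPrefix x k := by
  have h' := mem_cyl_prefix.mp h
  simp only [wordPrefix]
  exact congrArg List.ofFn (funext fun i => h' i i.2)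

lemma cyl_prefix_mono {x : Subshift A} {k l : ℕ} (h : k ≤ l) :
    cyl A (wordPrefix x l) ⊆ cyl A (wordPrefix x k) := fun _ hy =>
  mem_cyl_prefix.mpr fun i hi => mem_cyl_prefix.mp hy i (lt_of_lt_of_le hi h)

section Basics
variable {m : ℕ} {A : Matrix (Fin m) (Fin m) ℕ} {Ψ : ℕ → Subshift A → ℝ} {CΨ : ℝ}

lemma nonempty_subshift (hΨ : AlmostAdditive A Ψ CΨ) (hneg : PhiMax A Ψ CΨ < 0) :
    Nonempty (Subshift A) := by
  by_contra h
  rw [not_nonempty_iff] at h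
  have he : Set.range (Ψ 1) = ∅ := Set.range_eq_empty _
  have h0 : PhiMax A Ψ CΨ = CΨ := by rw [PhiMax, he, Real.sSup_empty, zero_add]
  rw [h0] at hneg; exact absurd hΨ.posC (not_lt.mpr hneg.le)

lemma bddAbove_range_psi (hΨ : AlmostAdditive A Ψ CΨ) (n : ℕ) : BddAbove (Set.range (Ψ n)) := by
  rw [← Set.image_univ]
  exact isCompact_univ.bddAbove_image (hΨ.cont n).continuousOn

lemma bddBelow_range_psi (hΨ : AlmostAdditive A Ψ CΨ) (n : ℕ) : BddBelow (Set.range (Ψ n)) := by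
  rw [← Set.image_univ]
  exact isCompact_univ.bddBelow_image (hΨ.cont n).continuousOn

lemma psi_le (hΨ : AlmostAdditive A Ψ CΨ) (x : Subshift A) (n : ℕ) :
    Ψ n x ≤ n * PhiMax A Ψ CΨ := by
  induction n generalizing x with
  | zero => simp [hΨ.zero]
  | succ n ih =>
    have h1 : Ψ (n + 1) x ≤ Ψ n x + Ψ 1 ((shiftT A)^[n] x) + CΨ := hΨ.upper n 1 x
    have h2 : Ψ 1 ((shiftT A)^[n] x) ≤ sSup (Set.range (Ψ 1)) :=
      le_csSup (bddAbove_range_psi hΨ 1) ⟨_, rfl⟩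
    have h3 := ih x
    rw [PhiMax] at h3 ⊢
    push_cast
    nlinarith

lemma le_psi (hΨ : AlmostAdditive A Ψ CΨ) (x : Subshift A) (n : ℕ) :
    (n : ℝ) * PhiMin A Ψ CΨ ≤ Ψ n x := by
  induction n generalizing x with
  | zero => simp [hΨ.zero]
  | succ n ih =>
    have h1 : Ψ n x + Ψ 1 ((shiftT A)^[n] x) - CΨ ≤ Ψ (n + 1) x := hΨ.lower n 1 x
    have h2 : sInf (Set.range (Ψ 1)) ≤ Ψ 1 ((shiftT A)^[n] x) :=
      csInf_le (bddBelow_range_psi hΨ 1) ⟨_, rfl⟩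
    have h3 := ih x
    rw [PhiMin] at h3 ⊢
    push_cast
    nlinarith

lemma phiMin_neg (hΨ : AlmostAdditive A Ψ CΨ) (hneg : PhiMax A Ψ CΨ < 0) :
    PhiMin A Ψ CΨ < 0 := by
  obtain ⟨x⟩ := nonempty_subshift hΨ hneg
  have h1 := le_psi hΨ x 1
  have h2 := psi_le hΨ x 1
  simp only [Nat.cast_one, one_mul] at h1 h2
  linarith

lemma bddAbove_wordSup_set (hΨ : AlmostAdditive A Ψ CΨ) (w : List (Fin m)) :
    BddAbove ((fun x => Real.exp (Ψ w.length x)) '' cyl A w) :=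
  (isCompact_cyl w).bddAbove_image
    ((Real.continuous_exp.comp (hΨ.cont _)).continuousOn)

lemma exp_le_wordSup (hΨ : AlmostAdditive A Ψ CΨ) {w : List (Fin m)} {y : Subshift A}
    (hy : y ∈ cyl A w) : Real.exp (Ψ w.length y) ≤ wordSup A Ψ w :=
  le_csSup (bddAbove_wordSup_set hΨ w) ⟨y, hy, rfl⟩

lemma wordSup_nonneg (hΨ : AlmostAdditive A Ψ CΨ) (w : List (Fin m)) :
    0 ≤ wordSup A Ψ w := by
  rcases Set.eq_empty_or_nonempty (cyl A w) with h | ⟨y, hy⟩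
  · simp [wordSup, h, Real.sSup_empty]
  · exact le_trans (Real.exp_pos _).le (exp_le_wordSup hΨ hy)

lemma wordSup_le_exp (hΨ : AlmostAdditive A Ψ CΨ) (w : List (Fin m)) :
    wordSup A Ψ w ≤ Real.exp (w.length * PhiMax A Ψ CΨ) := by
  refine Real.sSup_le ?_ (Real.exp_pos _).le
  rintro r ⟨y, hy, rfl⟩
  exact Real.exp_le_exp.mpr (psi_le hΨ y _)

lemma exp_le_wordSup_prefix (hΨ : AlmostAdditive A Ψ CΨ) {x y : Subshift A} {k : ℕ}
    (hy : y ∈ cyl A (wordPrefix x k)) : Real.exp (Ψ k y) ≤ wordSup A Ψ (wordPrefix x k) := by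
  have := exp_le_wordSup hΨ hy
  rwa [length_wordPrefix] at this

lemma wordSup_prefix_le_exp (hΨ : AlmostAdditive A Ψ CΨ) (x : Subshift A) (k : ℕ) :
    wordSup A Ψ (wordPrefix x k) ≤ Real.exp (k * PhiMax A Ψ CΨ) := by
  have := wordSup_le_exp hΨ (wordPrefix x k)
  rwa [length_wordPrefix] at this

lemma exp_min_le_wordSup_prefix (hΨ : AlmostAdditive A Ψ CΨ) (x : Subshift A) (k : ℕ) :
    Real.exp (k * PhiMin A Ψ CΨ) ≤ wordSup A Ψ (wordPrefix x k) :=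
  le_trans (Real.exp_le_exp.mpr (le_psi hΨ x k)) (exp_le_wordSup_prefix hΨ (self_mem_cyl_prefix x k))

lemma wordSup_prefix_anti (hΨ : AlmostAdditive A Ψ CΨ) (hneg : PhiMax A Ψ CΨ < 0)
    (x : Subshift A) : Antitone (fun k => wordSup A Ψ (wordPrefix x k)) := by
  refine antitone_nat_of_succ_le fun k => ?_
  refine Real.sSup_le ?_ (wordSup_nonneg hΨ _)
  rintro r ⟨y, hy, rfl⟩
  rw [length_wordPrefix]
  have h1 : Ψ (k + 1) y ≤ Ψ k y + Ψ 1 ((shiftT A)^[k] y) + CΨ := hΨ.upper k 1 y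
  have h2 : Ψ 1 ((shiftT A)^[k] y) ≤ sSup (Set.range (Ψ 1)) :=
    le_csSup (bddAbove_range_psi hΨ 1) ⟨_, rfl⟩
  have h3 : Ψ (k + 1) y ≤ Ψ k y := by rw [PhiMax] at hneg; linarith
  exact le_trans (Real.exp_le_exp.mpr h3)
    (exp_le_wordSup_prefix hΨ (cyl_prefix_mono (Nat.le_succ k) hy))

end Basics

section Dist
variable {m : ℕ} {A : Matrix (Fin m) (Fin m) ℕ} {Ψ : ℕ → Subshift A → ℝ} {CΨ : ℝ}

lemma dPsi_self (x : Subshift A) : dPsi A Ψ x x = 0 := by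
  simp [dPsi]

lemma dPsi_spec {x y : Subshift A} (h : x ≠ y) :
    ∃ j : ℕ, (∀ i < j, x.1 i = y.1 i) ∧ x.1 j ≠ y.1 j ∧
      dPsi A Ψ x y = wordSup A Ψ (wordPrefix x j) := by
  have hex : ∃ n, x.1 n ≠ y.1 n := by
    by_contra hc; push_neg at hc; exact h (Subtype.ext (funext hc))
  refine ⟨Nat.find hex, fun i hi => by simpa using Nat.find_min hex hi,
    Nat.find_spec hex, ?_⟩
  simp only [dPsi]
  rw [dif_neg h]

lemma dPsi_le_of_mem (hΨ : AlmostAdditive A Ψ CΨ) (hneg : PhiMax A Ψ CΨ < 0)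
    {x y : Subshift A} {k : ℕ} (hy : y ∈ cyl A (wordPrefix x k)) :
    dPsi A Ψ x y ≤ wordSup A Ψ (wordPrefix x k) := by
  by_cases hxy : x = y
  · rw [hxy, dPsi_self]; exact wordSup_nonneg hΨ _
  · obtain ⟨j, hagree, hdis, heq⟩ := dPsi_spec (Ψ := Ψ) hxy
    have hkj : k ≤ j := by
      by_contra hlt
      exact hdis (mem_cyl_prefix.mp hy j (lt_of_not_ge hlt)).symm
    rw [heq]
    exact wordSup_prefix_anti hΨ hneg x hkj

lemma ball_eq_cyl (hΨ : AlmostAdditive A Ψ CΨ) (hneg : PhiMax A Ψ CΨ < 0)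
    (x : Subshift A) {r : ℝ} {k : ℕ}
    (hk : wordSup A Ψ (wordPrefix x k) ≤ r)
    (hmin : ∀ j < k, r < wordSup A Ψ (wordPrefix x j)) :
    cyl A (wordPrefix x k) = ballD A Ψ x r := by
  ext y
  constructor
  · intro hy
    exact le_trans (dPsi_le_of_mem hΨ hneg hy) hk
  · intro (hy : dPsi A Ψ x y ≤ r)
    by_cases hxy : x = y
    · rw [← hxy]; exact self_mem_cyl_prefix x k
    · obtain ⟨j, hagree, hdis, heq⟩ := dPsi_spec (Ψ := Ψ) hxy
      have hkj : k ≤ j := by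
        by_contra hlt
        exact absurd (heq ▸ hy) (not_le.mpr (hmin j (lt_of_not_ge hlt)))
      exact mem_cyl_prefix.mpr fun i hi => (hagree i (lt_of_lt_of_le hi hkj)).symm

lemma exists_goodword (hΨ : AlmostAdditive A Ψ CΨ) (hneg : PhiMax A Ψ CΨ < 0)
    (x : Subshift A) (t : ℝ) :
    ∃ k : ℕ, wordSup A Ψ (wordPrefix x k) ≤ Real.exp (-t) ∧
      cyl A (wordPrefix x k) = ballD A Ψ x (Real.exp (-t)) ∧
      t / (-(PhiMin A Ψ CΨ)) ≤ (k : ℝ) := by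
  have hPmax : PhiMax A Ψ CΨ < 0 := hneg
  have hPmin := phiMin_neg hΨ hneg
  have hex : ∃ k : ℕ, wordSup A Ψ (wordPrefix x k) ≤ Real.exp (-t) := by
    refine ⟨⌈t / (-(PhiMax A Ψ CΨ))⌉₊, le_trans (wordSup_prefix_le_exp hΨ x _) ?_⟩
    apply Real.exp_le_exp.mpr
    have h1 : t / (-(PhiMax A Ψ CΨ)) ≤ (⌈t / (-(PhiMax A Ψ CΨ))⌉₊ : ℝ) := Nat.le_ceil _
    rw [div_le_iff₀ (by linarith)] at h1
    nlinarith
  refine ⟨Nat.find hex, Nat.find_spec hex, ?_, ?_⟩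
  · exact (ball_eq_cyl hΨ hneg x (Nat.find_spec hex)
      fun j hj => lt_of_not_ge (Nat.find_min hex hj))
  · have h1 : Real.exp ((Nat.find hex : ℝ) * PhiMin A Ψ CΨ) ≤ Real.exp (-t) :=
      le_trans (exp_min_le_wordSup_prefix hΨ x _) (Nat.find_spec hex)
    have h2 := Real.exp_le_exp.mp h1
    rw [div_le_iff₀ (by linarith)]
    nlinarith

end Dist

section Mix
variable {m : ℕ} {A : Matrix (Fin m) (Fin m) ℕ} {Ψ : ℕ → Subshift A → ℝ} {CΨ : ℝ}

lemma exists_path (h01 : ∀ i j, A i j = 0 ∨ A i j = 1) :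
    ∀ (p : ℕ) (i j : Fin m), 0 < (A ^ p) i j →
      ∃ c : ℕ → Fin m, c 0 = i ∧ c p = j ∧ ∀ l < p, A (c l) (c (l + 1)) = 1 := by
  intro p
  induction p with
  | zero =>
    intro i j h
    rw [pow_zero, Matrix.one_apply] at h
    by_cases hij : i = j
    · exact ⟨fun _ => i, rfl, by simp [hij], by simp⟩
    · simp [hij] at h
  | succ p ih =>
    intro i j h
    rw [pow_succ, Matrix.mul_apply] at h
    have : ∃ k, (A ^ p) i k * A k j ≠ 0 := by
      by_contra hc
      push_neg at hc
      simp [Finset.sum_eq_zero (fun k _ => hc k)] at h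
    obtain ⟨k, hk⟩ := this
    rw [Nat.mul_ne_zero_iff] at hk
    obtain ⟨c, hc0, hcp, hce⟩ := ih i k (Nat.pos_of_ne_zero hk.1)
    have hkj : A k j = 1 := by
      rcases h01 k j with h' | h'
      · exact absurd h' hk.2
      · exact h'
    refine ⟨fun l => if l ≤ p then c l else j, by simpa using hc0, by simp, ?_⟩
    intro l hl
    rcases Nat.lt_or_ge l p with hlp | hlp
    · simpa [Nat.le_of_lt hlp, Nat.succ_le_of_lt hlp] using hce l hlp
    · have hlp' : l = p := by omega
      subst hlp'
      simpa [hcp] using hkj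

lemma exists_succ_state {p₀ : ℕ} (h01 : ∀ i j, A i j = 0 ∨ A i j = 1) (hp : 0 < p₀)
    (hpos : ∀ i j, 0 < (A ^ p₀) i j) (i : Fin m) : ∃ j, A i j = 1 := by
  obtain ⟨c, hc0, _, hce⟩ := exists_path h01 p₀ i i (hpos i i)
  exact ⟨c 1, by rw [← hc0]; exact hce 0 hp⟩

lemma exists_follow {p₀ : ℕ} (h01 : ∀ i j, A i j = 0 ∨ A i j = 1) (hp : 0 < p₀)
    (hpos : ∀ i j, 0 < (A ^ p₀) i j) (s : Fin m) :
    ∃ y : ℕ → Fin m, y 0 = s ∧ ∀ n, A (y n) (y (n + 1)) = 1 := by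
  choose f hf using exists_succ_state h01 hp hpos
  refine ⟨fun n => f^[n] s, rfl, fun n => ?_⟩
  show A (f^[n] s) (f^[n + 1] s) = 1
  rw [Function.iterate_succ_apply']
  exact hf _

lemma branch {p₀ : ℕ} (h01 : ∀ i j, A i j = 0 ∨ A i j = 1) (hp : 0 < p₀)
    (hpos : ∀ i j, 0 < (A ^ p₀) i j) (hm2 : 2 ≤ m) (z : Subshift A) (j : ℕ) :
    ∃ (y : Subshift A) (j' : ℕ), (∀ i ≤ j, y.1 i = z.1 i) ∧ j < j' ∧ j' ≤ j + p₀ ∧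
      y.1 j' ≠ z.1 j' := by
  set a := z.1 j with ha
  set b : Fin m := if z.1 (j + p₀) = ⟨0, by omega⟩ then ⟨1, by omega⟩ else ⟨0, by omega⟩
    with hb
  have hbne : b ≠ z.1 (j + p₀) := by
    rw [hb]
    split
    · rename_i h; rw [h]; intro hc; exact absurd (congrArg Fin.val hc) (by simp)
    · rename_i h; exact fun hc => h hc.symm
  obtain ⟨c, hc0, hcp, hce⟩ := exists_path h01 p₀ a b (hpos a b)
  obtain ⟨e, he0, hee⟩ := exists_follow h01 hp hpos b
  set cf : ℕ → Fin m := fun l => if l ≤ p₀ then c l else e (l - p₀) with hcf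
  have hcf0 : cf 0 = a := by simp [hcf, hc0]
  have hcfp : cf p₀ = b := by simp [hcf, hcp]
  have hcfe : ∀ l, A (cf l) (cf (l + 1)) = 1 := by
    intro l
    rcases Nat.lt_or_ge l p₀ with hl | hl
    · simpa [hcf, Nat.le_of_lt hl, Nat.succ_le_of_lt hl] using hce l hl
    · rcases Nat.eq_or_lt_of_le hl with hl' | hl'
      · have h1 : cf l = b := by
          simp only [hcf]
          rw [if_pos hl'.ge]
          exact hl' ▸ hcp
        have h2 : cf (l + 1) = e 1 := by
          have hnn : ¬ l + 1 ≤ p₀ := by omega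
          have hd : l + 1 - p₀ = 1 := by omega
          simp only [hcf]
          rw [if_neg hnn, hd]
        rw [h1, h2, ← he0]
        exact hee 0
      · have h1 : cf l = e (l - p₀) := by simp [hcf, not_le.mpr hl']
        have h2 : cf (l + 1) = e (l - p₀ + 1) := by
          have hn : ¬ l + 1 ≤ p₀ := by omega
          have : l + 1 - p₀ = l - p₀ + 1 := by omega
          simp [hcf, hn, this]
        rw [h1, h2]
        exact hee _
  set Y : ℕ → Fin m := fun i => if i ≤ j then z.1 i else cf (i - j) with hY
  have hYe : ∀ n, A (Y n) (Y (n + 1)) = 1 := by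
    intro n
    rcases Nat.lt_or_ge n j with hn | hn
    · simpa [hY, Nat.le_of_lt hn, Nat.succ_le_of_lt hn] using z.2 n
    · rcases Nat.eq_or_lt_of_le hn with hn' | hn'
      · have h1 : Y n = cf 0 := by
          simp only [hY]
          rw [if_pos hn'.ge, hcf0, ha, hn']
        have h2 : Y (n + 1) = cf 1 := by
          have hnn : ¬ n + 1 ≤ j := by omega
          have hd : n + 1 - j = 1 := by omega
          simp only [hY]
          rw [if_neg hnn, hd]
        rw [h1, h2]; exact hcfe 0
      · have h1 : Y n = cf (n - j) := by simp [hY, not_le.mpr hn']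
        have h2 : Y (n + 1) = cf (n - j + 1) := by
          have hnn : ¬ n + 1 ≤ j := by omega
          have : n + 1 - j = n - j + 1 := by omega
          simp [hY, hnn, this]
        rw [h1, h2]; exact hcfe _
  refine ⟨⟨Y, hYe⟩, j + p₀, fun i hi => by simp [hY, hi], by omega, le_refl _, ?_⟩
  show Y (j + p₀) ≠ z.1 (j + p₀)
  have : Y (j + p₀) = b := by
    have hnn : ¬ j + p₀ ≤ j := by omega
    have hd : j + p₀ - j = p₀ := by omega
    simp [hY, hnn, hd, hcfp]
  rw [this]; exact hbne

lemma Bn_length_le {p₀ : ℕ} (hΨ : AlmostAdditive A Ψ CΨ) (hneg : PhiMax A Ψ CΨ < 0)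
    (h01 : ∀ i j, A i j = 0 ∨ A i j = 1) (hp : 0 < p₀)
    (hpos : ∀ i j, 0 < (A ^ p₀) i j) (hm2 : 2 ≤ m) {t : ℝ} {w : List (Fin m)}
    (hw : w ∈ Bn A Ψ t) : w.length ≤ ⌈t / (-(PhiMax A Ψ CΨ))⌉₊ + p₀ := by
  obtain ⟨z, hz⟩ := hw
  have hzmem : z ∈ cyl A w := by
    rw [hz]
    show dPsi A Ψ z z ≤ _
    rw [dPsi_self]
    exact (Real.exp_pos _).le
  set j := ⌈t / (-(PhiMax A Ψ CΨ))⌉₊ with hj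
  obtain ⟨y, j', hagree, hjj', hle, hne⟩ := branch h01 hp hpos hm2 z j
  have hyz : z ≠ y := fun hc => hne (by rw [← hc])
  have hyball : y ∈ ballD A Ψ z (Real.exp (-t)) := by
    show dPsi A Ψ z y ≤ Real.exp (-t)
    obtain ⟨j₀, hag, hd, heq⟩ := dPsi_spec (Ψ := Ψ) hyz
    have hj₀ : j ≤ j₀ := by
      by_contra hlt
      exact hd ((hagree j₀ (by omega)).symm)
    rw [heq]
    calc wordSup A Ψ (wordPrefix z j₀) ≤ wordSup A Ψ (wordPrefix z j) :=
          wordSup_prefix_anti hΨ hneg z hj₀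
      _ ≤ Real.exp ((j : ℝ) * PhiMax A Ψ CΨ) := wordSup_prefix_le_exp hΨ z j
      _ ≤ Real.exp (-t) := by
          apply Real.exp_le_exp.mpr
          have h1 : t / (-(PhiMax A Ψ CΨ)) ≤ (j : ℝ) := Nat.le_ceil _
          rw [div_le_iff₀ (by linarith)] at h1
          nlinarith
  rw [← hz] at hyball
  have hag2 : ∀ i < w.length, y.1 i = z.1 i := by
    intro i hi
    rw [hyball ⟨i, hi⟩, hzmem ⟨i, hi⟩]
  by_contra hlen
  exact hne (hag2 j' (by omega))

lemma Bn_finite {p₀ : ℕ} (hΨ : AlmostAdditive A Ψ CΨ) (hneg : PhiMax A Ψ CΨ < 0)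
    (h01 : ∀ i j, A i j = 0 ∨ A i j = 1) (hp : 0 < p₀)
    (hpos : ∀ i j, 0 < (A ^ p₀) i j) (hm2 : 2 ≤ m) (t : ℝ) :
    (Bn A Ψ t).Finite :=
  (List.finite_length_le (Fin m) (⌈t / (-(PhiMax A Ψ CΨ))⌉₊ + p₀)).subset
    fun _ hw => Bn_length_le hΨ hneg h01 hp hpos hm2 hw

lemma card_le_of_length_le (S : Set (List (Fin m))) (L : ℕ)
    (h : ∀ w ∈ S, w.length ≤ L) : Nat.card S ≤ (m + 1) ^ (L + 1) := by
  classical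
  have hinj : Function.Injective
      (fun w : S => (fun i : Fin (L + 1) => (w : List (Fin m))[(i : ℕ)]?)) := by
    intro u v huv
    apply Subtype.ext
    apply List.ext_getElem?
    intro n
    rcases Nat.lt_or_ge n (L + 1) with hn | hn
    · exact congrFun huv ⟨n, hn⟩
    · rw [List.getElem?_eq_none_iff.mpr (le_trans (h u u.2) (by omega)),
        List.getElem?_eq_none_iff.mpr (le_trans (h v v.2) (by omega))]
  calc Nat.card S ≤ Nat.card (Fin (L + 1) → Option (Fin m)) :=
        Nat.card_le_card_of_injective _ hinj
    _ = (m + 1) ^ (L + 1) := by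
        rw [Nat.card_eq_fintype_card, Fintype.card_fun]
        simp

end Mix

section DimGeneric
variable {X : Type*} {ρ : X → X → ℝ}

lemma setDiam_le {U : Set X} {δ : ℝ} (h : ∀ x ∈ U, ∀ y ∈ U, ρ x y ≤ δ) :
    setDiam ρ U ≤ ENNReal.ofReal δ :=
  iSup₂_le fun x hx => iSup₂_le fun y hy => ENNReal.ofReal_le_ofReal (h x hx y hy)

@[simp] lemma setDiam_empty : setDiam ρ (∅ : Set X) = 0 := by
  simp [setDiam]

lemma coverNum_le_of_cover {e : Set X} {δ : ℝ} {k : ℕ} (U : Fin k → Set X)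
    (hc : e ⊆ ⋃ i, U i) (hd : ∀ i, setDiam ρ (U i) ≤ ENNReal.ofReal δ) :
    coverNum ρ e δ ≤ k :=
  Nat.sInf_le ⟨U, hc, hd⟩

@[simp] lemma coverNum_empty (δ : ℝ) : coverNum ρ (∅ : Set X) δ = 0 := by
  have : coverNum ρ (∅ : Set X) δ ≤ 0 :=
    coverNum_le_of_cover (fun i : Fin 0 => ∅) (by simp) (fun i => i.elim0)
  omega

lemma exists_cover_coverNum {e : Set X} {δ : ℝ}
    (hne : ∃ k : ℕ, ∃ U : Fin k → Set X, e ⊆ ⋃ i, U i ∧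
      ∀ i, setDiam ρ (U i) ≤ ENNReal.ofReal δ) :
    ∃ U : Fin (coverNum ρ e δ) → Set X, e ⊆ ⋃ i, U i ∧
      ∀ i, setDiam ρ (U i) ≤ ENNReal.ofReal δ :=
  Nat.sInf_mem hne

lemma uboxD_empty : uboxD ρ (∅ : Set X) = 0 := by
  have : ∀ n : ℕ, ENNReal.ofReal (Real.log (coverNum ρ (∅ : Set X) (Real.exp (-(n : ℝ)))) / n)
      = 0 := by
    intro n; simp
  simp only [uboxD, this]
  simp [Filter.limsup_const]

lemma pdimD_empty : pdimD ρ (∅ : Set X) = 0 := by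
  refine le_antisymm ?_ zero_le
  refine le_trans (iInf₂_le (fun _ => (∅ : Set X)) (by simp)) ?_
  simp [uboxD_empty]

/-- If at every scale arbitrarily cheap covers exist, the `s`-Hausdorff measure vanishes. -/
lemma hMeasD_eq_zero {e : Set X} {s : ℝ}
    (h : ∀ δ : ℝ, 0 < δ → ∀ ε : ℝ, 0 < ε → ∃ U : ℕ → Set X, e ⊆ ⋃ n, U n ∧
      (∀ n, setDiam ρ (U n) ≤ ENNReal.ofReal δ) ∧
      ∑' n, setDiam ρ (U n) ^ s ≤ ENNReal.ofReal ε) :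
    hMeasD ρ s e = 0 := by
  refine le_antisymm (iSup₂_le fun δ hδ => ?_) zero_le
  refine ENNReal.le_of_forall_pos_le_add fun ε hε _ => ?_
  obtain ⟨U, hcov, hdiam, hsum⟩ := h δ hδ ε (by exact_mod_cast hε)
  refine le_trans (iInf₂_le U hcov) ?_
  refine le_trans (iInf_le _ hdiam) ?_
  rw [zero_add]
  exact le_trans hsum (by simp)

lemma hMeasD_zero_iUnion {e : Set X} {s : ℝ} (hs : 0 < s) (F : ℕ → Set X)
    (h : ∀ n, hMeasD ρ s (F n) = 0) (hcov : e ⊆ ⋃ n, F n) : hMeasD ρ s e = 0 := by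
  refine hMeasD_eq_zero fun δ hδ ε hε => ?_
  -- extract cheap covers of each piece
  have hpick : ∀ n : ℕ, ∃ U : ℕ → Set X, F n ⊆ ⋃ j, U j ∧
      (∀ j, setDiam ρ (U j) ≤ ENNReal.ofReal δ) ∧
      ∑' j, setDiam ρ (U j) ^ s < ENNReal.ofReal ε * (2 : ℝ≥0∞)⁻¹ ^ (n + 1) := by
    intro n
    have h0 : (⨅ (U : ℕ → Set X) (_ : F n ⊆ ⋃ j, U j)
        (_ : ∀ j, setDiam ρ (U j) ≤ ENNReal.ofReal δ), ∑' j, setDiam ρ (U j) ^ s) = 0 := by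
      have hz := h n
      rw [hMeasD, ENNReal.iSup_eq_zero] at hz
      have hz2 := hz δ
      rw [ENNReal.iSup_eq_zero] at hz2
      exact hz2 hδ
    have hpos : (0 : ℝ≥0∞) < ENNReal.ofReal ε * (2 : ℝ≥0∞)⁻¹ ^ (n + 1) := by
      apply ENNReal.mul_pos
      · simpa using hε
      · simp
    rw [← h0] at hpos
    obtain ⟨U, hU⟩ := iInf_lt_iff.mp hpos
    obtain ⟨hc, hU2⟩ := iInf_lt_iff.mp hU
    obtain ⟨hd, hU3⟩ := iInf_lt_iff.mp hU2
    exact ⟨U, hc, hd, hU3⟩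
  choose U hUc hUd hUs using hpick
  let pe : ℕ ≃ ℕ × ℕ := (Denumerable.eqv (ℕ × ℕ)).symm
  refine ⟨fun k => U (pe k).1 (pe k).2, ?_, fun k => hUd _ _, ?_⟩
  · intro x hx
    obtain ⟨n, hn⟩ := Set.mem_iUnion.mp (hcov hx)
    obtain ⟨j, hj⟩ := Set.mem_iUnion.mp (hUc n hn)
    exact Set.mem_iUnion.mpr ⟨pe.symm (n, j), by simpa [pe] using hj⟩
  · have heq : ∑' k, setDiam ρ (U (pe k).1 (pe k).2) ^ s
        = ∑' p : ℕ × ℕ, setDiam ρ (U p.1 p.2) ^ s :=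
      pe.tsum_eq fun p => setDiam ρ (U p.1 p.2) ^ s
    rw [heq, ENNReal.tsum_prod (f := fun n j => setDiam ρ (U n j) ^ s)]
    calc ∑' n, ∑' j, setDiam ρ (U n j) ^ s
        ≤ ∑' n : ℕ, ENNReal.ofReal ε * (2 : ℝ≥0∞)⁻¹ ^ (n + 1) :=
          ENNReal.tsum_le_tsum fun n => (hUs n).le
      _ = ENNReal.ofReal ε * ∑' n : ℕ, (2 : ℝ≥0∞)⁻¹ ^ (n + 1) := ENNReal.tsum_mul_left
      _ = ENNReal.ofReal ε := by
          have hgeo : ∑' (i : ℕ), (2 : ℝ≥0∞)⁻¹ ^ (i + 1) = 1 := by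
            have hp : ∀ i : ℕ, (2 : ℝ≥0∞)⁻¹ ^ (i + 1) = 2⁻¹ * 2⁻¹ ^ i := fun i => pow_succ' _ _
            rw [tsum_congr hp, ENNReal.tsum_mul_left, ENNReal.tsum_geometric,
              ENNReal.one_sub_inv_two, inv_inv]
            rw [ENNReal.inv_mul_cancel] <;> simp
          rw [hgeo, mul_one]
  
end DimGeneric

section DimGeneric2
variable {X : Type*} {ρ : X → X → ℝ}

lemma tendsto_exp_neg_nat (c : ℝ) (hc : 0 < c) :
    Tendsto (fun k : ℕ => Real.exp (-(c * k))) atTop (𝓝 0) := by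
  have h1 : Tendsto (fun k : ℕ => c * k) atTop atTop :=
    (tendsto_natCast_atTop_atTop).const_mul_atTop hc
  exact Real.tendsto_exp_atBot.comp (tendsto_neg_atBot_iff.mpr h1)

lemma hMeasD_zero_of_uboxD_lt {e : Set X} {s s' : ℝ}
    (FC : ∀ δ : ℝ, 0 < δ → ∃ (k : ℕ) (U : Fin k → Set X), (Set.univ ⊆ ⋃ i, U i) ∧
      ∀ i, setDiam ρ (U i) ≤ ENNReal.ofReal δ)
    (hub : uboxD ρ e < ENNReal.ofReal s') (h0 : 0 ≤ s') (hss : s' < s) :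
    hMeasD ρ s e = 0 := by
  have hs : 0 < s := lt_of_le_of_lt h0 hss
  rcases Set.eq_empty_or_nonempty e with rfl | hene
  · refine hMeasD_eq_zero fun δ hδ ε hε => ⟨fun _ => ∅, by simp, by simp, ?_⟩
    simp [ENNReal.zero_rpow_of_pos hs]
  refine hMeasD_eq_zero fun δ hδ ε hε => ?_
  have hev : ∀ᶠ k : ℕ in atTop,
      ENNReal.ofReal (Real.log (coverNum ρ e (Real.exp (-(k : ℝ)))) / k)
        < ENNReal.ofReal s' := eventually_lt_of_limsup_lt hub
  have hev2 : ∀ᶠ k : ℕ in atTop, Real.exp (-(k : ℝ)) ≤ δ := by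
    have h1 := (tendsto_exp_neg_nat 1 one_pos).eventually_le_const hδ
    simpa using h1
  have hev3 : ∀ᶠ k : ℕ in atTop, Real.exp (-((s - s') * k)) ≤ ε :=
    (tendsto_exp_neg_nat (s - s') (by linarith)).eventually_le_const hε
  obtain ⟨k, hk1, hk2, hk3, hk4⟩ :=
    (hev.and (hev2.and (hev3.and (eventually_ge_atTop 1)))).exists
  set c := coverNum ρ e (Real.exp (-(k : ℝ))) with hcdef
  obtain ⟨U, hUc, hUd⟩ := exists_cover_coverNum (e := e) (δ := Real.exp (-(k : ℝ)))
    (by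
      obtain ⟨K, V, hVc, hVd⟩ := FC _ (Real.exp_pos _)
      exact ⟨K, V, subset_trans (Set.subset_univ e) hVc, hVd⟩)
  have hcpos : 0 < c := by
    rcases Nat.eq_zero_or_pos c with h0' | h0'
    · exfalso
      obtain ⟨x, hx⟩ := hene
      obtain ⟨i, _⟩ := Set.mem_iUnion.mp (hUc hx)
      have h2 := i.2
      omega
    · exact h0'
  -- numeric bound on c
  have hlog : Real.log c / k < s' := by
    rw [ENNReal.ofReal_lt_ofReal_iff_of_nonneg] at hk1
    · exact hk1
    · apply div_nonneg _ (Nat.cast_nonneg k)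
      exact Real.log_natCast_nonneg c
  have hkpos : (0 : ℝ) < k := by exact_mod_cast hk4
  have hclt : (c : ℝ) < Real.exp ((k : ℝ) * s') := by
    rw [div_lt_iff₀ hkpos] at hlog
    calc (c : ℝ) = Real.exp (Real.log c) :=
          (Real.exp_log (by exact_mod_cast hcpos)).symm
      _ < Real.exp ((k : ℝ) * s') := Real.exp_lt_exp.mpr (by linarith)
  refine ⟨fun n => if h : n < c then U ⟨n, h⟩ else ∅, ?_, ?_, ?_⟩
  · intro x hx
    obtain ⟨i, hi⟩ := Set.mem_iUnion.mp (hUc hx)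
    exact Set.mem_iUnion.mpr ⟨i.1, by simp [i.2]; exact ⟨i.2, hi⟩⟩
  · intro n
    by_cases h : n < c
    · simp only [dif_pos h]
      exact le_trans (hUd ⟨n, h⟩) (ENNReal.ofReal_le_ofReal hk2)
    · simp [dif_neg h]
  · have hz : ∀ n ∉ Finset.range c,
        setDiam ρ (if h : n < c then U ⟨n, h⟩ else ∅) ^ s = 0 := by
      intro n hn
      rw [Finset.mem_range] at hn
      rw [dif_neg hn]
      simp [ENNReal.zero_rpow_of_pos hs]
    rw [tsum_eq_sum hz]
    have hbound : ∀ n ∈ Finset.range c,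
        setDiam ρ (if h : n < c then U ⟨n, h⟩ else ∅) ^ s
          ≤ ENNReal.ofReal (Real.exp (-(k : ℝ))) ^ s := by
      intro n hn
      rw [Finset.mem_range] at hn
      rw [dif_pos hn]
      exact ENNReal.rpow_le_rpow (hUd _) hs.le
    calc ∑ n ∈ Finset.range c, setDiam ρ (if h : n < c then U ⟨n, h⟩ else ∅) ^ s
        ≤ (Finset.range c).card • (ENNReal.ofReal (Real.exp (-(k : ℝ))) ^ s) :=
          Finset.sum_le_card_nsmul _ _ _ hbound
      _ = (c : ℝ≥0∞) * ENNReal.ofReal (Real.exp (-(k : ℝ))) ^ s := by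
          rw [Finset.card_range, nsmul_eq_mul]
      _ ≤ ENNReal.ofReal (Real.exp ((k : ℝ) * s')) * ENNReal.ofReal (Real.exp (-(k : ℝ) * s)) := by
          apply mul_le_mul'
          · rw [← ENNReal.ofReal_natCast]
            exact ENNReal.ofReal_le_ofReal hclt.le
          · rw [ENNReal.ofReal_rpow_of_pos (Real.exp_pos _), ← Real.exp_mul]
      _ = ENNReal.ofReal (Real.exp (-((s - s') * k))) := by
          rw [← ENNReal.ofReal_mul (Real.exp_pos _).le, ← Real.exp_add]
          ring_nf
      _ ≤ ENNReal.ofReal ε := ENNReal.ofReal_le_ofReal hk3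

lemma hdimD_le_pdimD
    (FC : ∀ δ : ℝ, 0 < δ → ∃ (k : ℕ) (U : Fin k → Set X), (Set.univ ⊆ ⋃ i, U i) ∧
      ∀ i, setDiam ρ (U i) ≤ ENNReal.ofReal δ)
    (e : Set X) : hdimD ρ e ≤ pdimD ρ e := by
  refine iSup₂_le fun s hs => ?_
  rcases eq_or_ne s 0 with rfl | hs0
  · simp
  refine le_iInf₂ fun F hF => ?_
  by_contra hlt
  push_neg at hlt
  obtain ⟨c, hc1, hc2⟩ := exists_between hlt
  have hcne : c ≠ ⊤ := (lt_of_lt_of_le hc2 le_top).ne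
  have hceq : ENNReal.ofReal c.toReal = c := ENNReal.ofReal_toReal hcne
  have hslt : c.toReal < ((s : ℝ≥0) : ℝ) := by
    have h1 := (ENNReal.toReal_lt_toReal hcne ENNReal.coe_ne_top).mpr hc2
    simpa using h1
  have hmz : ∀ n, hMeasD ρ ((s : ℝ≥0) : ℝ) (F n) = 0 := fun n => by
    refine hMeasD_zero_of_uboxD_lt FC ?_ ENNReal.toReal_nonneg hslt
    rw [hceq]
    exact lt_of_le_of_lt (le_iSup (fun n => uboxD ρ (F n)) n) hc1
  have hzz : hMeasD ρ ((s : ℝ≥0) : ℝ) e = 0 :=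
    hMeasD_zero_iUnion (by positivity) F hmz hF
  rw [hs] at hzz
  exact ENNReal.top_ne_zero hzz

end DimGeneric2

section Cover
variable {m : ℕ} {A : Matrix (Fin m) (Fin m) ℕ} {Ψ : ℕ → Subshift A → ℝ} {CΨ : ℝ}

lemma dPsi_le_of_two_mem_prefix (hΨ : AlmostAdditive A Ψ CΨ) (hneg : PhiMax A Ψ CΨ < 0)
    {x y z : Subshift A} {k : ℕ}
    (hy : y ∈ cyl A (wordPrefix x k)) (hz : z ∈ cyl A (wordPrefix x k)) :
    dPsi A Ψ y z ≤ wordSup A Ψ (wordPrefix x k) := by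
  have h1 : z ∈ cyl A (wordPrefix y k) := by rw [wordPrefix_eq_of_mem hy]; exact hz
  have h2 := dPsi_le_of_mem hΨ hneg h1
  rwa [wordPrefix_eq_of_mem hy] at h2

lemma setDiam_cyl_prefix (hΨ : AlmostAdditive A Ψ CΨ) (hneg : PhiMax A Ψ CΨ < 0)
    (x : Subshift A) (k : ℕ) :
    setDiam (dPsi A Ψ) (cyl A (wordPrefix x k))
      ≤ ENNReal.ofReal (wordSup A Ψ (wordPrefix x k)) :=
  setDiam_le fun _ hy _ hz => dPsi_le_of_two_mem_prefix hΨ hneg hy hz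

lemma mem_cyl_ofFn {L : ℕ} {f : Fin L → Fin m} {y : Subshift A}
    (hy : y ∈ cyl A (List.ofFn f)) (i : Fin L) : y.1 i = f i := by
  have h3 := hy ⟨i.1, by simp⟩
  simpa [List.get_ofFn] using h3

lemma FC_subshift (hΨ : AlmostAdditive A Ψ CΨ) (hneg : PhiMax A Ψ CΨ < 0) :
    ∀ δ : ℝ, 0 < δ → ∃ (k : ℕ) (U : Fin k → Set (Subshift A)),
      (Set.univ ⊆ ⋃ i, U i) ∧ ∀ i, setDiam (dPsi A Ψ) (U i) ≤ ENNReal.ofReal δ := by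
  intro δ hδ
  set L := ⌈Real.log δ / PhiMax A Ψ CΨ⌉₊ with hLdef
  have hPne : PhiMax A Ψ CΨ ≠ 0 := ne_of_lt hneg
  have hexp : Real.exp ((L : ℝ) * PhiMax A Ψ CΨ) ≤ δ := by
    have h1 : Real.log δ / PhiMax A Ψ CΨ ≤ (L : ℝ) := Nat.le_ceil _
    have h2 := mul_le_mul_of_nonpos_right h1 (le_of_lt hneg)
    rw [div_mul_cancel₀ _ hPne] at h2
    calc Real.exp ((L : ℝ) * PhiMax A Ψ CΨ) ≤ Real.exp (Real.log δ) :=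
          Real.exp_le_exp.mpr h2
      _ = δ := Real.exp_log hδ
  refine ⟨Fintype.card (Fin L → Fin m),
    fun i => cyl A (List.ofFn ((Fintype.equivFin (Fin L → Fin m)).symm i)), ?_, ?_⟩
  · intro x _
    refine Set.mem_iUnion.mpr ⟨Fintype.equivFin (Fin L → Fin m) (fun i : Fin L => x.1 i), ?_⟩
    simp only [Equiv.symm_apply_apply]
    exact self_mem_cyl_prefix x L
  · intro i
    set w := List.ofFn ((Fintype.equivFin (Fin L → Fin m)).symm i) with hw
    show setDiam (dPsi A Ψ) (cyl A w) ≤ ENNReal.ofReal δ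
    rcases Set.eq_empty_or_nonempty (cyl A w) with hemp | ⟨y, hy⟩
    · rw [hemp]; simp
    · have hwy : w = wordPrefix y L := by
        rw [hw]
        simp only [wordPrefix]
        exact congrArg List.ofFn (funext fun i' => (mem_cyl_ofFn (hw ▸ hy) i').symm)
      rw [hwy]
      refine le_trans (setDiam_cyl_prefix hΨ hneg y L) (ENNReal.ofReal_le_ofReal ?_)
      exact le_trans (wordSup_prefix_le_exp hΨ y L) hexp

end Cover

section FsetLemmas
variable {m : ℕ} {A : Matrix (Fin m) (Fin m) ℕ} {Ψ : ℕ → Subshift A → ℝ} {CΨ : ℝ}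
variable {E : Type*} [NormedAddCommGroup E] [NormedSpace ℝ E]
variable {Φ : ℕ → Subshift A → E} {p₀ : ℕ}

lemma Fset_subset_Bn (α : E) (t ε : ℝ) : Fset A Φ Ψ α t ε ⊆ Bn A Ψ t :=
  fun _ hu => hu.1

lemma Fset_finite (hΨ : AlmostAdditive A Ψ CΨ) (hneg : PhiMax A Ψ CΨ < 0)
    (h01 : ∀ i j, A i j = 0 ∨ A i j = 1) (hp : 0 < p₀)
    (hpos : ∀ i j, 0 < (A ^ p₀) i j) (hm2 : 2 ≤ m) (α : E) (t ε : ℝ) :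
    (Fset A Φ Ψ α t ε).Finite :=
  (Bn_finite hΨ hneg h01 hp hpos hm2 t).subset (Fset_subset_Bn α t ε)

lemma fcard_le_pow (hΨ : AlmostAdditive A Ψ CΨ) (hneg : PhiMax A Ψ CΨ < 0)
    (h01 : ∀ i j, A i j = 0 ∨ A i j = 1) (hp : 0 < p₀)
    (hpos : ∀ i j, 0 < (A ^ p₀) i j) (hm2 : 2 ≤ m) (α : E) (t ε : ℝ) :
    fcard A Φ Ψ α t ε ≤ (m + 1) ^ ((⌈t / (-(PhiMax A Ψ CΨ))⌉₊ + p₀) + 1) :=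
  card_le_of_length_le _ _ fun w hw =>
    Bn_length_le hΨ hneg h01 hp hpos hm2 (Fset_subset_Bn α t ε hw)

lemma fcard_mono (hΨ : AlmostAdditive A Ψ CΨ) (hneg : PhiMax A Ψ CΨ < 0)
    (h01 : ∀ i j, A i j = 0 ∨ A i j = 1) (hp : 0 < p₀)
    (hpos : ∀ i j, 0 < (A ^ p₀) i j) (hm2 : 2 ≤ m) (α : E) (t : ℝ) {ε ε' : ℝ}
    (h : ε ≤ ε') : fcard A Φ Ψ α t ε ≤ fcard A Φ Ψ α t ε' :=
  Nat.card_mono (Fset_finite hΨ hneg h01 hp hpos hm2 α t ε')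
    fun u hu => ⟨hu.1, by obtain ⟨x, hx1, hx2⟩ := hu.2; exact ⟨x, hx1, lt_of_lt_of_le hx2 h⟩⟩

/-- The uniform bound constant. -/
noncomputable def Kb (A : Matrix (Fin m) (Fin m) ℕ) (Ψ : ℕ → Subshift A → ℝ) (CΨ : ℝ)
    (p₀ : ℕ) : ℝ :=
  ((-(PhiMax A Ψ CΨ))⁻¹ + (p₀ + 2)) * Real.log (m + 1)

lemma Kb_nonneg (hneg : PhiMax A Ψ CΨ < 0) : 0 ≤ Kb A Ψ CΨ p₀ := by
  apply mul_nonneg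
  · have h1 : 0 < -(PhiMax A Ψ CΨ) := by linarith
    have h2 : 0 ≤ (-(PhiMax A Ψ CΨ))⁻¹ := inv_nonneg.mpr h1.le
    positivity
  · apply Real.log_nonneg
    have : (0 : ℝ) ≤ (m : ℝ) := Nat.cast_nonneg m
    linarith

lemma u_le_Kb (hΨ : AlmostAdditive A Ψ CΨ) (hneg : PhiMax A Ψ CΨ < 0)
    (h01 : ∀ i j, A i j = 0 ∨ A i j = 1) (hp : 0 < p₀)
    (hpos : ∀ i j, 0 < (A ^ p₀) i j) (hm2 : 2 ≤ m) (α : E) (ε : ℝ) (n : ℕ) :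
    Real.log (fcard A Φ Ψ α n ε) / n ≤ Kb A Ψ CΨ p₀ := by
  rcases Nat.eq_zero_or_pos n with rfl | hn
  · simpa using Kb_nonneg hneg
  have hP : 0 < -(PhiMax A Ψ CΨ) := by linarith
  set iP := (-(PhiMax A Ψ CΨ))⁻¹ with hiP
  have hiP0 : 0 ≤ iP := by positivity
  have hlg : 0 ≤ Real.log (m + 1) := by
    apply Real.log_nonneg
    have : (0:ℝ) ≤ (m:ℝ) := Nat.cast_nonneg m
    linarith
  set lg := Real.log (m + 1) with hlgdef
  -- main log bound
  have hL : (⌈(n : ℝ) / (-(PhiMax A Ψ CΨ))⌉₊ : ℝ) ≤ (n : ℝ) * iP + 1 := by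
    have h4 := Nat.ceil_lt_add_one (R := ℝ)
      (div_nonneg (Nat.cast_nonneg n) hP.le) (a := (n : ℝ) / (-(PhiMax A Ψ CΨ)))
    rw [hiP, ← div_eq_mul_inv]
    linarith
  have hcast : ((((m + 1) ^ ((⌈(n : ℝ) / (-(PhiMax A Ψ CΨ))⌉₊ + p₀) + 1) : ℕ) : ℝ))
      = ((m : ℝ) + 1) ^ ((⌈(n : ℝ) / (-(PhiMax A Ψ CΨ))⌉₊ + p₀) + 1) := by
    push_cast; ring
  have h1 : Real.log (fcard A Φ Ψ α n ε)
      ≤ (((n : ℝ) * iP + (p₀ + 2))) * lg := by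
    rcases Nat.eq_zero_or_pos (fcard A Φ Ψ α n ε) with h0 | h0
    · rw [h0]
      simp only [Nat.cast_zero, Real.log_zero]
      positivity
    · have h2 : Real.log (fcard A Φ Ψ α n ε)
          ≤ Real.log (((m + 1) ^ ((⌈(n : ℝ) / (-(PhiMax A Ψ CΨ))⌉₊ + p₀) + 1) : ℕ)) := by
        apply Real.log_le_log (by exact_mod_cast h0)
        exact_mod_cast fcard_le_pow hΨ hneg h01 hp hpos hm2 α n ε
      rw [hcast, Real.log_pow] at h2
      refine le_trans h2 ?_
      have h3 : ((((⌈(n : ℝ) / (-(PhiMax A Ψ CΨ))⌉₊ + p₀) + 1 : ℕ)) : ℝ)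
          ≤ (n : ℝ) * iP + (p₀ + 2) := by push_cast; linarith
      calc ((((⌈(n : ℝ) / (-(PhiMax A Ψ CΨ))⌉₊ + p₀) + 1 : ℕ)) : ℝ) * lg
          ≤ ((n : ℝ) * iP + (p₀ + 2)) * lg := by
            apply mul_le_mul_of_nonneg_right h3 hlg
        _ = _ := rfl
  have hnpos : (0 : ℝ) < n := by exact_mod_cast hn
  rw [div_le_iff₀ hnpos]
  have hn1 : (1 : ℝ) ≤ n := by exact_mod_cast hn
  calc Real.log (fcard A Φ Ψ α n ε) ≤ ((n : ℝ) * iP + (p₀ + 2)) * lg := h1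
    _ ≤ Kb A Ψ CΨ p₀ * n := by
        rw [Kb, ← hiP, ← hlgdef]
        have key : 0 ≤ ((p₀ : ℝ) + 2) * lg * ((n : ℝ) - 1) :=
          mul_nonneg (mul_nonneg (by positivity) hlg) (by linarith)
        nlinarith [key]

lemma u_nonneg (α : E) (ε : ℝ) (n : ℕ) :
    0 ≤ Real.log (fcard A Φ Ψ α n ε) / n :=
  div_nonneg (Real.log_natCast_nonneg _) (Nat.cast_nonneg n)

lemma g_bdd (hΨ : AlmostAdditive A Ψ CΨ) (hneg : PhiMax A Ψ CΨ < 0)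
    (h01 : ∀ i j, A i j = 0 ∨ A i j = 1) (hp : 0 < p₀)
    (hpos : ∀ i j, 0 < (A ^ p₀) i j) (hm2 : 2 ≤ m) (α : E) (ε : ℝ) :
    IsBoundedUnder (· ≤ ·) atTop (fun n : ℕ => Real.log (fcard A Φ Ψ α n ε) / n) :=
  Filter.isBoundedUnder_of ⟨Kb A Ψ CΨ p₀, fun n => u_le_Kb hΨ hneg h01 hp hpos hm2 α ε n⟩

lemma g_cobdd (α : E) (ε : ℝ) :
    IsCoboundedUnder (· ≤ ·) atTop (fun n : ℕ => Real.log (fcard A Φ Ψ α n ε) / n) :=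
  IsBoundedUnder.isCoboundedUnder_le
    (Filter.isBoundedUnder_of ⟨0, fun n => u_nonneg α ε n⟩)

lemma g_nonneg (hΨ : AlmostAdditive A Ψ CΨ) (hneg : PhiMax A Ψ CΨ < 0)
    (h01 : ∀ i j, A i j = 0 ∨ A i j = 1) (hp : 0 < p₀)
    (hpos : ∀ i j, 0 < (A ^ p₀) i j) (hm2 : 2 ≤ m) (α : E) (ε : ℝ) :
    0 ≤ limsup (fun n : ℕ => Real.log (fcard A Φ Ψ α n ε) / n) atTop :=
  le_limsup_of_frequently_le (Filter.Eventually.of_forall (fun n => u_nonneg α ε n)).frequently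
    (g_bdd hΨ hneg h01 hp hpos hm2 α ε)

lemma g_le_Kb (hΨ : AlmostAdditive A Ψ CΨ) (hneg : PhiMax A Ψ CΨ < 0)
    (h01 : ∀ i j, A i j = 0 ∨ A i j = 1) (hp : 0 < p₀)
    (hpos : ∀ i j, 0 < (A ^ p₀) i j) (hm2 : 2 ≤ m) (α : E) (ε : ℝ) :
    limsup (fun n : ℕ => Real.log (fcard A Φ Ψ α n ε) / n) atTop ≤ Kb A Ψ CΨ p₀ :=
  limsup_le_of_le (g_cobdd α ε)
    (Filter.Eventually.of_forall fun n => u_le_Kb hΨ hneg h01 hp hpos hm2 α ε n)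

lemma g_mono (hΨ : AlmostAdditive A Ψ CΨ) (hneg : PhiMax A Ψ CΨ < 0)
    (h01 : ∀ i j, A i j = 0 ∨ A i j = 1) (hp : 0 < p₀)
    (hpos : ∀ i j, 0 < (A ^ p₀) i j) (hm2 : 2 ≤ m) (α : E) :
    Monotone (fun ε => limsup (fun n : ℕ => Real.log (fcard A Φ Ψ α n ε) / n) atTop) := by
  intro ε ε' hee
  refine limsup_le_limsup (Filter.Eventually.of_forall fun n => ?_) (g_cobdd α ε)
    (g_bdd hΨ hneg h01 hp hpos hm2 α ε')
  rcases Nat.eq_zero_or_pos n with rfl | hn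
  · simp
  have hlog : Real.log (fcard A Φ Ψ α n ε) ≤ Real.log (fcard A Φ Ψ α n ε') := by
    rcases Nat.eq_zero_or_pos (fcard A Φ Ψ α n ε) with h0 | h0
    · rw [h0, Nat.cast_zero, Real.log_zero]
      exact Real.log_natCast_nonneg _
    · exact Real.log_le_log (by exact_mod_cast h0)
        (by exact_mod_cast fcard_mono hΨ hneg h01 hp hpos hm2 α n hee)
  have hnpos : (0 : ℝ) < n := by exact_mod_cast hn
  exact div_le_div_of_nonneg_right hlog hnpos.le

lemma lambdaD_eq (hΨ : AlmostAdditive A Ψ CΨ) (hneg : PhiMax A Ψ CΨ < 0)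
    (h01 : ∀ i j, A i j = 0 ∨ A i j = 1) (hp : 0 < p₀)
    (hpos : ∀ i j, 0 < (A ^ p₀) i j) (hm2 : 2 ≤ m) (α : E) :
    LambdaD A Φ Ψ α = sInf ((fun ε => limsup
        (fun n : ℕ => Real.log (fcard A Φ Ψ α n ε) / n) atTop) '' Set.Ioi 0) :=
  ((g_mono hΨ hneg h01 hp hpos hm2 α).tendsto_nhdsGT 0).limUnder_eq

lemma lambdaD_nonneg (hΨ : AlmostAdditive A Ψ CΨ) (hneg : PhiMax A Ψ CΨ < 0)
    (h01 : ∀ i j, A i j = 0 ∨ A i j = 1) (hp : 0 < p₀)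
    (hpos : ∀ i j, 0 < (A ^ p₀) i j) (hm2 : 2 ≤ m) (α : E) :
    0 ≤ LambdaD A Φ Ψ α := by
  rw [lambdaD_eq hΨ hneg h01 hp hpos hm2 α]
  refine le_csInf (Set.Nonempty.image _ ⟨1, Set.mem_Ioi.mpr one_pos⟩) ?_
  rintro b ⟨ε, hε, rfl⟩
  exact g_nonneg hΨ hneg h01 hp hpos hm2 α ε

lemma lambdaD_le_Kb (hΨ : AlmostAdditive A Ψ CΨ) (hneg : PhiMax A Ψ CΨ < 0)
    (h01 : ∀ i j, A i j = 0 ∨ A i j = 1) (hp : 0 < p₀)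
    (hpos : ∀ i j, 0 < (A ^ p₀) i j) (hm2 : 2 ≤ m) (α : E) :
    LambdaD A Φ Ψ α ≤ Kb A Ψ CΨ p₀ := by
  rw [lambdaD_eq hΨ hneg h01 hp hpos hm2 α]
  refine le_trans (csInf_le ?_ (Set.mem_image_of_mem _ (Set.mem_Ioi.mpr one_pos))) ?_
  · refine ⟨0, ?_⟩
    rintro b ⟨ε, hε, rfl⟩
    exact g_nonneg hΨ hneg h01 hp hpos hm2 α ε
  · exact g_le_Kb hΨ hneg h01 hp hpos hm2 α 1

lemma exists_eps_fine (hΨ : AlmostAdditive A Ψ CΨ) (hneg : PhiMax A Ψ CΨ < 0)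
    (h01 : ∀ i j, A i j = 0 ∨ A i j = 1) (hp : 0 < p₀)
    (hpos : ∀ i j, 0 < (A ^ p₀) i j) (hm2 : 2 ≤ m) (α : E) {δ : ℝ} (hδ : 0 < δ) :
    ∃ ε > 0, limsup (fun n : ℕ => Real.log (fcard A Φ Ψ α n ε) / n) atTop
      < LambdaD A Φ Ψ α + δ := by
  have h1 : sInf ((fun ε => limsup
      (fun n : ℕ => Real.log (fcard A Φ Ψ α n ε) / n) atTop) '' Set.Ioi 0)
      < LambdaD A Φ Ψ α + δ := by
    rw [lambdaD_eq hΨ hneg h01 hp hpos hm2 α] at *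
    linarith
  obtain ⟨b, ⟨ε, hε, rfl⟩, hlt⟩ :=
    exists_lt_of_csInf_lt (Set.Nonempty.image _ ⟨1, Set.mem_Ioi.mpr one_pos⟩) h1
  exact ⟨ε, hε, hlt⟩

end FsetLemmas

section Covering
variable {m : ℕ} {A : Matrix (Fin m) (Fin m) ℕ} {Ψ : ℕ → Subshift A → ℝ} {CΨ : ℝ}
variable {E : Type*} [NormedAddCommGroup E] [NormedSpace ℝ E]
variable {Φ : ℕ → Subshift A → E} {p₀ : ℕ}

lemma coverNum_EN_le (hΨ : AlmostAdditive A Ψ CΨ) (hneg : PhiMax A Ψ CΨ < 0)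
    (h01 : ∀ i j, A i j = 0 ∨ A i j = 1) (hp : 0 < p₀)
    (hpos : ∀ i j, 0 < (A ^ p₀) i j) (hm2 : 2 ≤ m)
    (N : ℕ) {ε' : ℝ} (hε' : 0 < ε')
    (t : Finset E) (εf : E → ℝ)
    (Ω : Set E)
    (hnet : ∀ β ∈ Ω, ∃ a ∈ t, ‖β - a‖ < εf a / 2)
    (hsmall : ∀ a ∈ t, ε' ≤ εf a / 2)
    (n : ℕ) (hn : (N : ℝ) * (-(PhiMin A Ψ CΨ)) ≤ n) :
    coverNum (dPsi A Ψ)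
      {x : Subshift A | ∀ j, N ≤ j → ∃ β ∈ Ω, ‖(j : ℝ)⁻¹ • Φ j x - β‖ < ε'}
      (Real.exp (-(n : ℝ))) ≤ ∑ a ∈ t, fcard A Φ Ψ a n (εf a) := by
  classical
  have hPmin := phiMin_neg hΨ hneg
  set EN : Set (Subshift A) :=
    {x | ∀ j, N ≤ j → ∃ β ∈ Ω, ‖(j : ℝ)⁻¹ • Φ j x - β‖ < ε'} with hEN
  set W : Set (List (Fin m)) :=
    {w | ∃ x ∈ EN, ∃ k : ℕ, w = wordPrefix x k ∧
      wordSup A Ψ w ≤ Real.exp (-(n : ℝ)) ∧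
      cyl A w = ballD A Ψ x (Real.exp (-(n : ℝ))) ∧ N ≤ k} with hW
  -- Step 1 : W ⊆ union of the Fsets
  have hstep1 : W ⊆ ⋃ a ∈ t, Fset A Φ Ψ a n (εf a) := by
    rintro w ⟨x, hx, k, rfl, hws, hball, hNk⟩
    obtain ⟨β, hβΩ, hβ⟩ := hx k hNk
    obtain ⟨a, hat, ha⟩ := hnet β hβΩ
    have htri : ‖(k : ℝ)⁻¹ • Φ k x - a‖ < εf a := by
      have h1 : ‖(k : ℝ)⁻¹ • Φ k x - a‖ ≤ ‖(k : ℝ)⁻¹ • Φ k x - β‖ + ‖β - a‖ :=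
        norm_sub_le_norm_sub_add_norm_sub _ _ _
      have h2 := hsmall a hat
      linarith
    refine Set.mem_biUnion hat ⟨⟨x, hball⟩, x, self_mem_cyl_prefix x k, ?_⟩
    rw [length_wordPrefix]
    exact htri
  -- Step 2 : W is finite
  have hWfin : W.Finite := by
    refine (Bn_finite hΨ hneg h01 hp hpos hm2 (n : ℝ)).subset ?_
    rintro w ⟨x, _, k, rfl, _, hball, _⟩
    exact ⟨x, hball⟩
  -- Step 3 : coverNum ≤ card W
  have hstep3 : coverNum (dPsi A Ψ) EN (Real.exp (-(n : ℝ))) ≤ hWfin.toFinset.card := by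
    refine coverNum_le_of_cover
      (fun i => cyl A ((hWfin.toFinset.equivFin.symm i) : List (Fin m))) ?_ ?_
    · intro x hx
      obtain ⟨k, hk1, hk2, hk3⟩ := exists_goodword hΨ hneg x (n : ℝ)
      have hNk : N ≤ k := by
        have h4 : (N : ℝ) ≤ (n : ℝ) / (-(PhiMin A Ψ CΨ)) := by
          rw [le_div_iff₀ (by linarith)]
          exact hn
        have h5 : (N : ℝ) ≤ (k : ℝ) := le_trans h4 hk3
        exact_mod_cast h5
      have hmem : wordPrefix x k ∈ W := ⟨x, hx, k, rfl, hk1, hk2, hNk⟩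
      refine Set.mem_iUnion.mpr ⟨hWfin.toFinset.equivFin ⟨wordPrefix x k,
        hWfin.mem_toFinset.mpr hmem⟩, ?_⟩
      rw [Equiv.symm_apply_apply]
      exact self_mem_cyl_prefix x k
    · intro i
      obtain ⟨x', hx', k', hw', hws', _, _⟩ :=
        hWfin.mem_toFinset.mp (hWfin.toFinset.equivFin.symm i).2
      show setDiam (dPsi A Ψ)
        (cyl A ((hWfin.toFinset.equivFin.symm i) : List (Fin m)))
          ≤ ENNReal.ofReal (Real.exp (-(n : ℝ)))
      rw [hw']
      refine le_trans (setDiam_cyl_prefix hΨ hneg x' k') ?_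
      exact ENNReal.ofReal_le_ofReal (hw' ▸ hws')
  -- Step 4 : card W ≤ sum of fcards
  have hstep4 : hWfin.toFinset.card ≤ ∑ a ∈ t, fcard A Φ Ψ a n (εf a) := by
    have hsub : hWfin.toFinset ⊆
        t.biUnion fun a => (Fset_finite (Φ := Φ) hΨ hneg h01 hp hpos hm2 a n (εf a)).toFinset := by
      intro w hw
      obtain ⟨a, hat, hwa⟩ := Set.mem_iUnion₂.mp (hstep1 (hWfin.mem_toFinset.mp hw))
      exact Finset.mem_biUnion.mpr ⟨a, hat,
        (Fset_finite (Φ := Φ) hΨ hneg h01 hp hpos hm2 a n (εf a)).mem_toFinset.mpr hwa⟩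
    refine le_trans (Finset.card_le_card hsub) (le_trans (Finset.card_biUnion_le) ?_)
    refine Finset.sum_le_sum fun a _ => le_of_eq ?_
    rw [fcard, Nat.card_coe_set_eq,
      Set.ncard_eq_toFinset_card _ (Fset_finite (Φ := Φ) hΨ hneg h01 hp hpos hm2 a (n : ℝ) (εf a))]
  exact le_trans hstep3 hstep4

end Covering

section Main
variable {m : ℕ} {A : Matrix (Fin m) (Fin m) ℕ} {Ψ : ℕ → Subshift A → ℝ} {CΨ : ℝ}
variable {E : Type*} [NormedAddCommGroup E] [NormedSpace ℝ E]
variable {Φ : ℕ → Subshift A → E}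

lemma pdimD_subsingleton (h : Subsingleton (Subshift A)) (e : Set (Subshift A)) :
    pdimD (dPsi A Ψ) e = 0 := by
  refine le_antisymm ?_ zero_le
  refine le_trans (iInf₂_le (fun _ => (Set.univ : Set (Subshift A)))
    (by rw [Set.iUnion_const]; exact Set.subset_univ e)) ?_
  refine iSup_le fun _ => ?_
  have hcov : ∀ n : ℕ, coverNum (dPsi A Ψ) (Set.univ : Set (Subshift A))
      (Real.exp (-(n : ℝ))) ≤ 1 := by
    intro n
    refine coverNum_le_of_cover (fun _ : Fin 1 => Set.univ)
      (by rw [Set.iUnion_const]) fun _ => ?_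
    refine setDiam_le fun x _ y _ => ?_
    have hxy : x = y := Subsingleton.elim x y
    rw [hxy, dPsi_self]
    exact (Real.exp_pos _).le
  have hz : ∀ n : ℕ, ENNReal.ofReal (Real.log (coverNum (dPsi A Ψ)
      (Set.univ : Set (Subshift A)) (Real.exp (-(n : ℝ)))) / n) = 0 := by
    intro n
    have h1 := hcov n
    interval_cases h2 : coverNum (dPsi A Ψ) (Set.univ : Set (Subshift A))
      (Real.exp (-(n : ℝ)))
    · simp
    · simp
  rw [uboxD]
  have : (fun n : ℕ => ENNReal.ofReal (Real.log (coverNum (dPsi A Ψ)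
      (Set.univ : Set (Subshift A)) (Real.exp (-(n : ℝ)))) / n)) = fun _ => 0 :=
    funext hz
  rw [this, limsup_const]

lemma subsingleton_subshift (hm : m < 2) : Subsingleton (Subshift A) := by
  have hfin : Subsingleton (Fin m) := by
    constructor
    intro a b
    have ha := a.2
    have hb := b.2
    exact Fin.ext (by omega)
  constructor
  intro x y
  exact Subtype.ext (funext fun n => Subsingleton.elim _ _)

lemma part1 (hA : Mixing A) (hΨ : AlmostAdditive A Ψ CΨ) (hneg : PhiMax A Ψ CΨ < 0)
    (Ω : Set E) (hΩ : IsCompact Ω) :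
    pdimD (dPsi A Ψ) (⋃ α ∈ Ω, EPhi A Φ α) ≤
      ENNReal.ofReal (sSup {r | ∃ α ∈ Ω, r = LambdaD A Φ Ψ α}) := by
  classical
  obtain ⟨h01, p₀, hp, hpos⟩ := hA
  rcases Set.eq_empty_or_nonempty Ω with rfl | hΩne
  · rw [Set.biUnion_empty, pdimD_empty]
    exact zero_le
  rcases lt_or_ge m 2 with hm | hm2
  · rw [pdimD_subsingleton (subsingleton_subshift hm)]
    exact zero_le
  have hbdd : BddAbove {r | ∃ α ∈ Ω, r = LambdaD A Φ Ψ α} := by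
    refine ⟨Kb A Ψ CΨ p₀, ?_⟩
    rintro r ⟨α, hα, rfl⟩
    exact lambdaD_le_Kb hΨ hneg h01 hp hpos hm2 α
  set SΛ := sSup {r | ∃ α ∈ Ω, r = LambdaD A Φ Ψ α} with hSΛ
  have hSle : ∀ α ∈ Ω, LambdaD A Φ Ψ α ≤ SΛ := fun α hα => le_csSup hbdd ⟨α, hα, rfl⟩
  obtain ⟨α₀, hα₀⟩ := hΩne
  have hS0 : 0 ≤ SΛ :=
    le_trans (lambdaD_nonneg hΨ hneg h01 hp hpos hm2 α₀) (hSle α₀ hα₀)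
  refine ENNReal.le_of_forall_pos_le_add fun δn hδn _ => ?_
  set δ : ℝ := (δn : ℝ) / 2 with hδdef
  have hδ : 0 < δ := by
    have : (0 : ℝ) < δn := hδn
    rw [hδdef]; linarith
  suffices h : pdimD (dPsi A Ψ) (⋃ α ∈ Ω, EPhi A Φ α) ≤ ENNReal.ofReal (SΛ + 2 * δ) by
    have heq : SΛ + 2 * δ = SΛ + (δn : ℝ) := by rw [hδdef]; ring
    rw [heq, ENNReal.ofReal_add hS0 (by positivity)] at h
    simpa [ENNReal.ofReal_coe_nnreal] using h
  have hch : ∀ α, α ∈ Ω → ∃ ε, 0 < ε ∧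
      limsup (fun n : ℕ => Real.log (fcard A Φ Ψ α n ε) / n) atTop
        < LambdaD A Φ Ψ α + δ := by
    intro α hα
    obtain ⟨ε, hε1, hε2⟩ := exists_eps_fine hΨ hneg h01 hp hpos hm2 α hδ
    exact ⟨ε, hε1, hε2⟩
  choose! εf hεf1 hεf2 using hch
  have hcov : Ω ⊆ ⋃ α ∈ Ω, Metric.ball α (εf α / 2) := fun β hβ =>
    Set.mem_biUnion hβ (Metric.mem_ball_self (by have := hεf1 β hβ; linarith))
  obtain ⟨net, hnetΩ, hnetfin, hnetcov⟩ := hΩ.elim_finite_subcover_image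
    (fun α _ => Metric.isOpen_ball) hcov
  set t : Finset E := hnetfin.toFinset with ht
  have htmem : ∀ a, a ∈ t ↔ a ∈ net := fun a => hnetfin.mem_toFinset
  have htne : t.Nonempty := by
    obtain ⟨a, ha, _⟩ := Set.mem_iUnion₂.mp (hnetcov hα₀)
    exact ⟨a, (htmem a).mpr ha⟩
  set ε' : ℝ := t.inf' htne (fun a => εf a / 2) with hε'def
  have hε'pos : 0 < ε' := by
    rw [hε'def]
    rw [Finset.lt_inf'_iff]
    intro a hat
    have := hεf1 a (hnetΩ ((htmem a).mp hat))
    linarith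
  have hsmall : ∀ a ∈ t, ε' ≤ εf a / 2 := fun a hat => Finset.inf'_le _ hat
  have hnet : ∀ β ∈ Ω, ∃ a ∈ t, ‖β - a‖ < εf a / 2 := by
    intro β hβ
    obtain ⟨a, ha, hball⟩ := Set.mem_iUnion₂.mp (hnetcov hβ)
    refine ⟨a, (htmem a).mpr ha, ?_⟩
    have := Metric.mem_ball.mp hball
    rwa [dist_eq_norm] at this
  set F : ℕ → Set (Subshift A) := fun N =>
    {x | ∀ j, N ≤ j → ∃ β ∈ Ω, ‖(j : ℝ)⁻¹ • Φ j x - β‖ < ε'} with hF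
  have hFcov : (⋃ α ∈ Ω, EPhi A Φ α) ⊆ ⋃ N, F N := by
    intro x hx
    obtain ⟨α, hα, hxα⟩ := Set.mem_iUnion₂.mp hx
    obtain ⟨N, hN⟩ := Metric.tendsto_atTop.mp hxα ε' hε'pos
    refine Set.mem_iUnion.mpr ⟨N, fun j hj => ⟨α, hα, ?_⟩⟩
    have := hN j hj
    rwa [dist_eq_norm] at this
  refine le_trans (iInf₂_le F hFcov) ?_
  refine iSup_le fun N => ?_
  -- eventual bounds
  have hev1 : ∀ᶠ n : ℕ in atTop, ∀ a ∈ t,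
      Real.log (fcard A Φ Ψ a n (εf a)) / n < SΛ + δ := by
    rw [Filter.eventually_all_finset]
    intro a hat
    have hΩa : a ∈ Ω := hnetΩ ((htmem a).mp hat)
    have hlt : limsup (fun n : ℕ => Real.log (fcard A Φ Ψ a n (εf a)) / n) atTop
        < SΛ + δ := lt_of_lt_of_le (hεf2 a hΩa) (by have := hSle a hΩa; linarith)
    exact eventually_lt_of_limsup_lt hlt (g_bdd hΨ hneg h01 hp hpos hm2 a (εf a))
  have hev2 : ∀ᶠ n : ℕ in atTop, (N : ℝ) * (-(PhiMin A Ψ CΨ)) ≤ (n : ℝ) :=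
    (eventually_ge_atTop ⌈(N : ℝ) * (-(PhiMin A Ψ CΨ))⌉₊).mono fun n hn =>
      le_trans (Nat.le_ceil _) (by exact_mod_cast hn)
  have hev3 : ∀ᶠ n : ℕ in atTop, Real.log t.card / n ≤ δ :=
    (tendsto_const_div_atTop_nhds_zero_nat (Real.log t.card)).eventually_le_const hδ
  have hev4 : ∀ᶠ n : ℕ in atTop, 1 ≤ n := eventually_ge_atTop 1
  rw [uboxD]
  refine limsup_le_of_le (by isBoundedDefault) ?_
  filter_upwards [hev1, hev2, hev3, hev4] with n h1 h2 h3 h4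
  have hkey : coverNum (dPsi A Ψ) (F N) (Real.exp (-(n : ℝ)))
      ≤ ∑ a ∈ t, fcard A Φ Ψ a n (εf a) :=
    coverNum_EN_le hΨ hneg h01 hp hpos hm2 N hε'pos t εf Ω hnet hsmall n h2
  apply ENNReal.ofReal_le_ofReal
  set c := coverNum (dPsi A Ψ) (F N) (Real.exp (-(n : ℝ))) with hcdef
  have hn1 : (1 : ℝ) ≤ (n : ℝ) := by exact_mod_cast h4
  have hnpos : (0 : ℝ) < n := by linarith
  rcases Nat.eq_zero_or_pos c with hc0 | hcpos
  · rw [hc0]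
    simp only [Nat.cast_zero, Real.log_zero, zero_div]
    linarith
  -- sum bound
  have hsum : ((∑ a ∈ t, fcard A Φ Ψ a n (εf a) : ℕ) : ℝ)
      ≤ (t.card : ℝ) * Real.exp ((n : ℝ) * (SΛ + δ)) := by
    push_cast
    have hterm : ∀ a ∈ t, ((fcard A Φ Ψ a n (εf a) : ℕ) : ℝ)
        ≤ Real.exp ((n : ℝ) * (SΛ + δ)) := by
      intro a hat
      have hlog := h1 a hat
      rcases Nat.eq_zero_or_pos (fcard A Φ Ψ a n (εf a)) with hf0 | hfpos
      · rw [hf0]; simpa using (Real.exp_pos _).le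
      · have hfr : (0 : ℝ) < (fcard A Φ Ψ a n (εf a) : ℝ) := by exact_mod_cast hfpos
        have : Real.log (fcard A Φ Ψ a n (εf a)) < (n : ℝ) * (SΛ + δ) := by
          rw [div_lt_iff₀ hnpos] at hlog
          linarith
        calc ((fcard A Φ Ψ a n (εf a) : ℕ) : ℝ)
            = Real.exp (Real.log (fcard A Φ Ψ a n (εf a))) := (Real.exp_log hfr).symm
          _ ≤ Real.exp ((n : ℝ) * (SΛ + δ)) := Real.exp_le_exp.mpr this.le
    calc (∑ a ∈ t, ((fcard A Φ Ψ a n (εf a) : ℕ) : ℝ))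
        ≤ t.card • Real.exp ((n : ℝ) * (SΛ + δ)) :=
          Finset.sum_le_card_nsmul _ _ _ hterm
      _ = (t.card : ℝ) * Real.exp ((n : ℝ) * (SΛ + δ)) := by
          rw [nsmul_eq_mul]
  have hcr : (1 : ℝ) ≤ (c : ℝ) := by exact_mod_cast hcpos
  have htcard : (1 : ℝ) ≤ (t.card : ℝ) := by
    have := htne.card_pos
    exact_mod_cast this
  have hlogc : Real.log c ≤ Real.log t.card + (n : ℝ) * (SΛ + δ) := by
    have h5 : Real.log c ≤ Real.log ((t.card : ℝ) * Real.exp ((n : ℝ) * (SΛ + δ))) := by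
      apply Real.log_le_log (by linarith)
      calc (c : ℝ) ≤ ((∑ a ∈ t, fcard A Φ Ψ a n (εf a) : ℕ) : ℝ) := by exact_mod_cast hkey
        _ ≤ _ := hsum
    rwa [Real.log_mul (by linarith) (Real.exp_ne_zero _), Real.log_exp] at h5
  calc Real.log c / n ≤ (Real.log t.card + (n : ℝ) * (SΛ + δ)) / n := by
        apply div_le_div_of_nonneg_right hlogc hnpos.le
    _ = Real.log t.card / n + (SΛ + δ) := by
        rw [add_div, mul_div_assoc]
        congr 1
        field_simp
    _ ≤ SΛ + 2 * δ := by linarith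

end Main
/-- Upper bound: for compact `Ω ⊆ L_Φ`,
`dim_P E_Φ(Ω) ≤ sup {Λ(α) : α ∈ Ω}`; in particular
`dim_H E_Φ(α) ≤ dim_P E_Φ(α) ≤ Λ(α)` for `α ∈ L_Φ`. -/
theorem statement9 {m d : ℕ} (hm : 0 < m) (A : Matrix (Fin m) (Fin m) ℕ) (hA : Mixing A)
    (Ψ : ℕ → Subshift A → ℝ) (CΨ : ℝ) (hΨ : AlmostAdditive A Ψ CΨ)
    (hneg : PhiMax A Ψ CΨ < 0)
    (Φ : ℕ → Subshift A → EuclideanSpace ℝ (Fin d)) (C : Fin d → ℝ)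
    (hΦ : AlmostAdditiveVec A Φ C) :
    (∀ Ω : Set (EuclideanSpace ℝ (Fin d)), IsCompact Ω → Ω ⊆ LPhi A Φ →
      pdimD (dPsi A Ψ) (⋃ α ∈ Ω, EPhi A Φ α) ≤
        ENNReal.ofReal (sSup {r : ℝ | ∃ α ∈ Ω, r = LambdaD A Φ Ψ α})) ∧
    (∀ α ∈ LPhi A Φ,
      hdimD (dPsi A Ψ) (EPhi A Φ α) ≤ pdimD (dPsi A Ψ) (EPhi A Φ α) ∧
      pdimD (dPsi A Ψ) (EPhi A Φ α) ≤ ENNReal.ofReal (LambdaD A Φ Ψ α)) := by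
  constructor
  · intro Ω hΩc _
    exact part1 hA hΨ hneg Ω hΩc
  · intro α _
    refine ⟨hdimD_le_pdimD (FC_subshift hΨ hneg) _, ?_⟩
    have h1 := part1 (Φ := Φ) hA hΨ hneg {α} isCompact_singleton
    have h2 : (⋃ β ∈ ({α} : Set (EuclideanSpace ℝ (Fin d))), EPhi A Φ β) = EPhi A Φ α := by
      simp
    have h3 : {r | ∃ β ∈ ({α} : Set (EuclideanSpace ℝ (Fin d))), r = LambdaD A Φ Ψ β}
        = {LambdaD A Φ Ψ α} := by
      ext r
      simp [eq_comm]
    rw [h2, h3, csSup_singleton] at h1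
    exact h1
end AlmostAdditivePaper
end

section
/- Let (Σ_A, T) be a topologically mixing subshift of finite type and Φ ∈ C_aa(Σ_A,T,d). For each k ∈ ℕ define the step approximation Φ^{(k)} = (S_n φ̃_k)_{n≥1}, where φ̃_k(x) := φ_k(x_w)/k for x ∈ [w], w ∈ Σ_{A,k}, and x_w ∈ [w] an arbitrary chosen point. Then: (i) Φ_min ≤ Φ^{(k)}_min ≤ Φ^{(k)}_max ≤ Φ_max (componentwise); (ii) ‖φ_n − S_n φ̃_k‖_∞ ≤ d·((n/k)|C(Φ)| + 5k‖Φ‖ + (‖Φ‖_k/k)·n) for all n; and consequently (iii) ‖Φ − Φ^{(k)}‖_lim → 0 as k → ∞. -/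
open Filter Topology MeasureTheory Set
open scoped ENNReal NNReal

namespace AlmostAdditivePaper

variable {m : ℕ}

variable {E : Type*} [NormedAddCommGroup E] [NormedSpace ℝ E]

/-- The step function `φ̃_k(x) = φ_k(x_w)/k` for `x ∈ [w]`, `|w| = k`, where
`pt w = x_w` is an arbitrarily chosen point of `[w]`. -/
noncomputable def stepFn {m d : ℕ} (A : Matrix (Fin m) (Fin m) ℕ)
    (Φ : ℕ → Subshift A → EuclideanSpace ℝ (Fin d)) (pt : List (Fin m) → Subshift A)
    (k : ℕ) (x : Subshift A) : EuclideanSpace ℝ (Fin d) :=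
  (k : ℝ)⁻¹ • Φ k (pt (wordPrefix x k))

/-- The Birkhoff sums `S_n φ̃_k`, i.e. the additive approximation `Φ^{(k)}`. -/
noncomputable def stepApprox {m d : ℕ} (A : Matrix (Fin m) (Fin m) ℕ)
    (Φ : ℕ → Subshift A → EuclideanSpace ℝ (Fin d)) (pt : List (Fin m) → Subshift A)
    (k n : ℕ) (x : Subshift A) : EuclideanSpace ℝ (Fin d) :=
  ∑ j ∈ Finset.range n, stepFn A Φ pt k ((shiftT A)^[j] x)

section AuxLemmas

variable {m : ℕ} {A : Matrix (Fin m) (Fin m) ℕ}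

lemma shift_iterate_apply (x : Subshift A) (n i : ℕ) :
    ((shiftT A)^[n] x).1 i = x.1 (i + n) := by
  induction n generalizing i with
  | zero => rfl
  | succ n ih =>
    rw [Function.iterate_succ_apply']
    show ((shiftT A)^[n] x).1 (i + 1) = _
    rw [ih (i+1), show i + 1 + n = i + (n+1) by omega]

lemma wordPrefix_eq_iff {x y : Subshift A} {k : ℕ} :
    wordPrefix x k = wordPrefix y k ↔ ∀ i < k, x.1 i = y.1 i := by
  constructor
  · intro h i hi
    have := List.ofFn_inj.1 h
    exact congrFun this ⟨i, hi⟩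
  · intro h
    exact List.ofFn_inj.2 (funext fun i => h i.1 i.2)

lemma mem_cyl_prefix_iff {x y : Subshift A} {k : ℕ} :
    y ∈ cyl A (wordPrefix x k) ↔ wordPrefix y k = wordPrefix x k := by
  unfold cyl wordPrefix
  simp only [Set.mem_setOf_eq, List.ofFn_inj]
  constructor
  · intro h
    funext i
    have := h (Fin.cast (by simp) i)
    rw [List.get_ofFn] at this
    simpa using this
  · intro h i
    rw [List.get_ofFn]
    have := congrFun h (Fin.cast (by simp) i)
    simpa using this

lemma isClosed_subshift : IsClosed {x : ℕ → Fin m | ∀ n, A (x n) (x (n + 1)) = 1} := by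
  have : {x : ℕ → Fin m | ∀ n, A (x n) (x (n + 1)) = 1}
      = ⋂ n : ℕ, {x : ℕ → Fin m | A (x n) (x (n + 1)) = 1} := by
    ext x; simp
  rw [this]
  refine isClosed_iInter fun n => ?_
  have hc : Continuous fun x : ℕ → Fin m => (x n, x (n + 1)) :=
    (continuous_apply n).prodMk (continuous_apply (n + 1))
  exact (isClosed_discrete {p : Fin m × Fin m | A p.1 p.2 = 1}).preimage hc

instance inst_s11 : CompactSpace (Subshift A) :=
  isCompact_iff_compactSpace.1 (isClosed_subshift.isCompact)

lemma nonempty_subshift_s11 (hm : 0 < m) (hA : Mixing A) : Nonempty (Subshift A) := by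
  obtain ⟨h01, p₀, hp₀, hpos⟩ := hA
  have hsucc : ∀ i : Fin m, ∃ j : Fin m, A i j = 1 := by
    intro i
    have h := hpos i i
    have hp : A ^ p₀ = A * A ^ (p₀ - 1) := by
      conv_lhs => rw [show p₀ = 1 + (p₀ - 1) by omega]
      rw [pow_add, pow_one]
    rw [hp, Matrix.mul_apply] at h
    by_contra hc
    push_neg at hc
    have : ∀ j : Fin m, A i j * (A ^ (p₀ - 1)) j i = 0 := by
      intro j
      rcases h01 i j with h0 | h1
      · simp [h0]
      · exact absurd h1 (hc j)
    simp [Finset.sum_eq_zero fun j _ => this j] at h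
  have : Nonempty (Fin m) := ⟨⟨0, hm⟩⟩
  obtain ⟨i₀⟩ := this
  let succ : Fin m → Fin m := fun i => Classical.choose (hsucc i)
  refine ⟨⟨fun n => succ^[n] i₀, fun n => ?_⟩⟩
  show A (succ^[n] i₀) (succ^[n+1] i₀) = 1
  rw [Function.iterate_succ_apply']
  exact Classical.choose_spec (hsucc (succ^[n] i₀))

end AuxLemmas
section AuxScalar

variable {m : ℕ} {A : Matrix (Fin m) (Fin m) ℕ} {φ : ℕ → Subshift A → ℝ} {c : ℝ}

lemma bddAbove_range_cont {f : Subshift A → ℝ} (hf : Continuous f) :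
    BddAbove (Set.range f) := by
  rw [← Set.image_univ]
  exact IsCompact.bddAbove_image isCompact_univ hf.continuousOn

lemma bddBelow_range_cont {f : Subshift A → ℝ} (hf : Continuous f) :
    BddBelow (Set.range f) := by
  rw [← Set.image_univ]
  exact IsCompact.bddBelow_image isCompact_univ hf.continuousOn

lemma le_phiMax (h : AlmostAdditive A φ c) : ∀ (n : ℕ) (x : Subshift A), φ n x ≤ n * PhiMax A φ c := by
  intro n
  induction n with
  | zero => intro x; simp [h.zero x]
  | succ n ih =>
    intro x
    calc φ (n + 1) x ≤ φ n x + φ 1 ((shiftT A)^[n] x) + c := h.upper n 1 x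
    _ ≤ n * PhiMax A φ c + sSup (Set.range (φ 1)) + c := by
        have h1 : φ 1 ((shiftT A)^[n] x) ≤ sSup (Set.range (φ 1)) :=
          le_csSup (bddAbove_range_cont (h.cont 1)) ⟨_, rfl⟩
        have := ih x
        linarith
    _ = (n + 1 : ℕ) * PhiMax A φ c := by unfold PhiMax; push_cast; ring

lemma phiMin_le (h : AlmostAdditive A φ c) : ∀ (n : ℕ) (x : Subshift A), (n : ℝ) * PhiMin A φ c ≤ φ n x := by
  intro n
  induction n with
  | zero => intro x; simp [h.zero x]
  | succ n ih =>
    intro x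
    have hl := h.lower n 1 x
    have h1 : sInf (Set.range (φ 1)) ≤ φ 1 ((shiftT A)^[n] x) :=
      csInf_le (bddBelow_range_cont (h.cont 1)) ⟨_, rfl⟩
    have := ih x
    have : ((n : ℝ) + 1) * PhiMin A φ c ≤ φ (n + 1) x := by
      unfold PhiMin at *
      nlinarith
    push_cast
    linarith [this]

lemma phiNorm_nonneg : 0 ≤ PhiNorm A φ c :=
  le_trans (abs_nonneg _) (le_max_left _ _)

lemma abs_le_phiNorm (h : AlmostAdditive A φ c) (n : ℕ) (x : Subshift A) :
    |φ n x| ≤ n * PhiNorm A φ c := by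
  rw [abs_le]
  constructor
  · have := phiMin_le h n x
    have h2 : (n : ℝ) * -PhiNorm A φ c ≤ (n : ℝ) * PhiMin A φ c := by
      apply mul_le_mul_of_nonneg_left _ (Nat.cast_nonneg n)
      have : |PhiMin A φ c| ≤ PhiNorm A φ c := le_max_right _ _
      have := neg_abs_le (PhiMin A φ c)
      linarith
    have : -((n:ℝ) * PhiNorm A φ c) = (n:ℝ) * -PhiNorm A φ c := by ring
    linarith [h2, phiMin_le h n x]
  · have h2 : (n : ℝ) * PhiMax A φ c ≤ (n : ℝ) * PhiNorm A φ c := by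
      apply mul_le_mul_of_nonneg_left _ (Nat.cast_nonneg n)
      have : |PhiMax A φ c| ≤ PhiNorm A φ c := le_max_left _ _
      have := le_abs_self (PhiMax A φ c)
      linarith
    linarith [le_phiMax h n x]

lemma c_le_phiNorm [Nonempty (Subshift A)] (h : AlmostAdditive A φ c) :
    c ≤ PhiNorm A φ c := by
  have hle : sInf (Set.range (φ 1)) ≤ sSup (Set.range (φ 1)) :=
    csInf_le_csSup (Set.range_nonempty _) (bddBelow_range_cont (h.cont 1))
      (bddAbove_range_cont (h.cont 1))
  have h1 : PhiMin A φ c ≤ PhiMax A φ c - 2 * c := by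
    unfold PhiMin PhiMax; linarith
  have ha : PhiMax A φ c ≤ PhiNorm A φ c := le_trans (le_abs_self _) (le_max_left _ _)
  have hb : -PhiNorm A φ c ≤ PhiMin A φ c := by
    have : |PhiMin A φ c| ≤ PhiNorm A φ c := le_max_right _ _
    have := neg_abs_le (PhiMin A φ c)
    linarith
  linarith

end AuxScalar
section AuxVec

variable {m d : ℕ} {A : Matrix (Fin m) (Fin m) ℕ}
  {Φ : ℕ → Subshift A → EuclideanSpace ℝ (Fin d)} {C : Fin d → ℝ}

lemma enorm_le_sum_abs (v : EuclideanSpace ℝ (Fin d)) : ‖v‖ ≤ ∑ j, |v j| := by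
  rw [EuclideanSpace.norm_eq]
  have h1 : ∀ j : Fin d, ‖v j‖ = |v j| := fun j => Real.norm_eq_abs _
  have h2 : (∑ j, ‖v j‖ ^ 2) ≤ (∑ j, |v j|) ^ 2 := by
    rw [sq]
    calc ∑ j, ‖v j‖ ^ 2 ≤ ∑ j, |v j| * ∑ i, |v i| := by
          apply Finset.sum_le_sum
          intro j _
          rw [h1 j, sq]
          exact mul_le_mul_of_nonneg_left
            (Finset.single_le_sum (fun i _ => abs_nonneg (v i)) (Finset.mem_univ j))
            (abs_nonneg _)
    _ = (∑ j, |v j|) * ∑ i, |v i| := by rw [← Finset.sum_mul]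
  calc √(∑ j, ‖v j‖ ^ 2) ≤ √((∑ j, |v j|) ^ 2) := Real.sqrt_le_sqrt h2
  _ = abs (∑ j, |v j|) := Real.sqrt_sq_eq_abs _
  _ = ∑ j, |v j| := abs_of_nonneg (Finset.sum_nonneg fun j _ => abs_nonneg _)

lemma abs_apply_le_enorm (v : EuclideanSpace ℝ (Fin d)) (j : Fin d) : |v j| ≤ ‖v‖ := by
  rw [EuclideanSpace.norm_eq, ← Real.sqrt_sq_eq_abs]
  apply Real.sqrt_le_sqrt
  calc (v j) ^ 2 = ‖v j‖ ^ 2 := by rw [Real.norm_eq_abs, sq_abs]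
  _ ≤ ∑ i, ‖v i‖ ^ 2 :=
      Finset.single_le_sum (fun i _ => sq_nonneg ‖v i‖) (Finset.mem_univ j)

lemma varN_elem_bound (hΦ : AlmostAdditiveVec A Φ C) (k : ℕ) (x y : Subshift A) :
    ‖Φ k x - Φ k y‖ ≤ ∑ j, 2 * k * PhiNorm A (fun n x => Φ n x j) (C j) := by
  calc ‖Φ k x - Φ k y‖ ≤ ∑ j, |(Φ k x - Φ k y) j| := enorm_le_sum_abs _
  _ ≤ ∑ j, 2 * k * PhiNorm A (fun n x => Φ n x j) (C j) := by
      apply Finset.sum_le_sum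
      intro j _
      have hsub : (Φ k x - Φ k y) j = Φ k x j - Φ k y j := rfl
      rw [hsub]
      have h1 : |Φ k x j| ≤ k * PhiNorm A (fun n x => Φ n x j) (C j) :=
        abs_le_phiNorm (hΦ j) k x
      have h2 : |Φ k y j| ≤ k * PhiNorm A (fun n x => Φ n x j) (C j) :=
        abs_le_phiNorm (hΦ j) k y
      calc |Φ k x j - Φ k y j| ≤ |Φ k x j| + |Φ k y j| := abs_sub _ _
      _ ≤ 2 * k * PhiNorm A (fun n x => Φ n x j) (C j) := by linarith

lemma bddAbove_varN_set (hΦ : AlmostAdditiveVec A Φ C) (k l : ℕ) :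
    BddAbove {r : ℝ | ∃ x y : Subshift A,
      wordPrefix x l = wordPrefix y l ∧ r = ‖Φ k x - Φ k y‖} := by
  refine ⟨∑ j, 2 * k * PhiNorm A (fun n x => Φ n x j) (C j), fun r hr => ?_⟩
  obtain ⟨x, y, hxy, rfl⟩ := hr
  exact varN_elem_bound hΦ k x y

lemma varN_nonneg [Nonempty (Subshift A)] (hΦ : AlmostAdditiveVec A Φ C) (k : ℕ) :
    0 ≤ varN A (Φ k) k := by
  obtain ⟨x⟩ := ‹Nonempty (Subshift A)›
  have h0 : (0 : ℝ) ∈ {r : ℝ | ∃ x y : Subshift A,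
      wordPrefix x k = wordPrefix y k ∧ r = ‖Φ k x - Φ k y‖} :=
    ⟨x, x, rfl, by simp⟩
  exact le_csSup (bddAbove_varN_set hΦ k k) h0

lemma le_varN (hΦ : AlmostAdditiveVec A Φ C) {k : ℕ} {x y : Subshift A}
    (hpre : wordPrefix x k = wordPrefix y k) : ‖Φ k x - Φ k y‖ ≤ varN A (Φ k) k :=
  le_csSup (bddAbove_varN_set hΦ k k) ⟨x, y, hpre, rfl⟩

end AuxVec
section AuxKey

variable {m : ℕ} {A : Matrix (Fin m) (Fin m) ℕ} {φ : ℕ → Subshift A → ℝ} {c : ℝ}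

/-- Core scalar estimate: the Birkhoff average of any `V`-approximation `g` of
`φ_k` along the orbit of `x` approximates `φ_n x`. -/
lemma key_scalar (h : AlmostAdditive A φ c) {k : ℕ} (hk : 0 < k) (n : ℕ)
    (x : Subshift A) (g : ℕ → ℝ) {V : ℝ}
    (hg : ∀ i, |g i - φ k ((shiftT A)^[i] x)| ≤ V) :
    |φ n x - (k : ℝ)⁻¹ * ∑ i ∈ Finset.range n, g i| ≤
      ((n : ℝ) * V + n * c) / k + 2 * k * PhiNorm A φ c + c := by
  set N := PhiNorm A φ c with hN
  set f : ℕ → ℝ := fun t => φ t x with hf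
  have hkR : (0 : ℝ) < k := by exact_mod_cast hk
  have e1 : |∑ i ∈ Finset.range n, g i - ∑ i ∈ Finset.range n, φ k ((shiftT A)^[i] x)|
      ≤ n * V := by
    rw [← Finset.sum_sub_distrib]
    calc |∑ i ∈ Finset.range n, (g i - φ k ((shiftT A)^[i] x))|
        ≤ ∑ i ∈ Finset.range n, |g i - φ k ((shiftT A)^[i] x)| :=
          Finset.abs_sum_le_sum_abs _ _
    _ ≤ ∑ _i ∈ Finset.range n, V := Finset.sum_le_sum fun i _ => hg i
    _ = n * V := by simp [Finset.sum_const, Finset.card_range, nsmul_eq_mul]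
  have e2 : |∑ i ∈ Finset.range n, φ k ((shiftT A)^[i] x)
      - ∑ i ∈ Finset.range n, (f (i + k) - f i)| ≤ n * c := by
    rw [← Finset.sum_sub_distrib]
    calc |∑ i ∈ Finset.range n, (φ k ((shiftT A)^[i] x) - (f (i + k) - f i))|
        ≤ ∑ i ∈ Finset.range n, |φ k ((shiftT A)^[i] x) - (f (i + k) - f i)| :=
          Finset.abs_sum_le_sum_abs _ _
    _ ≤ ∑ _i ∈ Finset.range n, c := by
        apply Finset.sum_le_sum
        intro i _
        have hu := h.upper i k x
        have hl := h.lower i k x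
        rw [abs_le]
        constructor <;> simp only [hf] <;> linarith
    _ = n * c := by simp [Finset.sum_const, Finset.card_range, nsmul_eq_mul]
  have e3 : ∑ i ∈ Finset.range n, (f (i + k) - f i)
      = ∑ t ∈ Finset.range k, (f (n + t) - f t) := by
    rw [Finset.sum_sub_distrib, Finset.sum_sub_distrib]
    have h1 : ∑ i ∈ Finset.range (k + n), f i
        = ∑ i ∈ Finset.range k, f i + ∑ i ∈ Finset.range n, f (k + i) :=
      Finset.sum_range_add f k n
    have h2 : ∑ i ∈ Finset.range (n + k), f i
        = ∑ i ∈ Finset.range n, f i + ∑ t ∈ Finset.range k, f (n + t) :=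
      Finset.sum_range_add f n k
    have h3 : ∑ i ∈ Finset.range n, f (i + k) = ∑ i ∈ Finset.range n, f (k + i) :=
      Finset.sum_congr rfl fun i _ => by rw [add_comm]
    rw [h3]
    have h4 : k + n = n + k := add_comm k n
    rw [h4] at h1
    linarith
  have e4 : |∑ t ∈ Finset.range k, (f (n + t) - f t) - k * f n|
      ≤ k * (2 * k * N + c) := by
    have hconst : (k : ℝ) * f n = ∑ _t ∈ Finset.range k, f n := by
      rw [Finset.sum_const, Finset.card_range, nsmul_eq_mul]
    rw [hconst, ← Finset.sum_sub_distrib]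
    calc |∑ t ∈ Finset.range k, (f (n + t) - f t - f n)|
        ≤ ∑ t ∈ Finset.range k, |f (n + t) - f t - f n| :=
          Finset.abs_sum_le_sum_abs _ _
    _ ≤ ∑ _t ∈ Finset.range k, (2 * k * N + c) := by
        apply Finset.sum_le_sum
        intro t ht
        have htk : t ≤ k := le_of_lt (Finset.mem_range.1 ht)
        have htN : (t : ℝ) * N ≤ k * N :=
          mul_le_mul_of_nonneg_right (by exact_mod_cast htk) phiNorm_nonneg
        have hft : |f t| ≤ t * N := abs_le_phiNorm h t x
        have hmid : |f (n + t) - f n| ≤ t * N + c := by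
          have hu := h.upper n t x
          have hl := h.lower n t x
          have habs := abs_le_phiNorm h t ((shiftT A)^[n] x)
          rw [abs_le] at habs ⊢
          constructor <;> simp only [hf] <;> linarith
        calc |f (n + t) - f t - f n| ≤ |f (n + t) - f n| + |f t| := by
              have := abs_sub (f (n + t) - f n) (f t)
              have heq : f (n + t) - f t - f n = (f (n + t) - f n) - f t := by ring
              rw [heq]
              exact abs_sub _ _
        _ ≤ 2 * k * N + c := by linarith
    _ = k * (2 * k * N + c) := by
        rw [Finset.sum_const, Finset.card_range, nsmul_eq_mul]
  -- combine
  have hcomb : |∑ i ∈ Finset.range n, g i - k * φ n x|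
      ≤ n * V + n * c + k * (2 * k * N + c) := by
    have t1 := abs_sub_le (∑ i ∈ Finset.range n, g i)
      (∑ i ∈ Finset.range n, φ k ((shiftT A)^[i] x)) ((k : ℝ) * φ n x)
    have t2 := abs_sub_le (∑ i ∈ Finset.range n, φ k ((shiftT A)^[i] x))
      (∑ i ∈ Finset.range n, (f (i + k) - f i)) ((k : ℝ) * φ n x)
    rw [e3] at e2 t2
    have hfn : (f n : ℝ) = φ n x := rfl
    rw [hfn] at e4
    linarith
  have heq : φ n x - (k : ℝ)⁻¹ * ∑ i ∈ Finset.range n, g i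
      = -((k : ℝ)⁻¹ * (∑ i ∈ Finset.range n, g i - k * φ n x)) := by
    field_simp
    ring
  rw [heq, abs_neg, abs_mul, abs_inv, abs_of_pos hkR]
  calc (k : ℝ)⁻¹ * |∑ i ∈ Finset.range n, g i - k * φ n x|
      ≤ (k : ℝ)⁻¹ * (n * V + n * c + k * (2 * k * N + c)) := by
        apply mul_le_mul_of_nonneg_left hcomb (by positivity)
  _ = ((n : ℝ) * V + n * c) / k + 2 * k * N + c := by
      field_simp
      ring
end AuxKey
section AuxPart2

variable {m d : ℕ} {A : Matrix (Fin m) (Fin m) ℕ}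
  {Φ : ℕ → Subshift A → EuclideanSpace ℝ (Fin d)} {C : Fin d → ℝ}

lemma part_two [Nonempty (Subshift A)] (hΦ : AlmostAdditiveVec A Φ C)
    (pt : List (Fin m) → Subshift A)
    (hpt : ∀ (x : Subshift A) (k : ℕ), pt (wordPrefix x k) ∈ cyl A (wordPrefix x k))
    {k : ℕ} (hk : 0 < k) (n : ℕ) (x : Subshift A) :
    ‖Φ n x - stepApprox A Φ pt k n x‖ ≤
      (d : ℝ) * (((n : ℝ) / k) * Real.sqrt (∑ j, (C j) ^ 2) +
        5 * k * Real.sqrt (∑ j, (PhiNorm A (fun n x => Φ n x j) (C j)) ^ 2) +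
        (varN A (Φ k) k / k) * n) := by
  set V := varN A (Φ k) k with hVdef
  set SC := Real.sqrt (∑ j, (C j) ^ 2) with hSC
  set SN := Real.sqrt (∑ j, (PhiNorm A (fun n x => Φ n x j) (C j)) ^ 2) with hSN
  have hkR : (0 : ℝ) < k := by exact_mod_cast hk
  have hk1 : (1 : ℝ) ≤ k := by exact_mod_cast hk
  have hV0 : 0 ≤ V := varN_nonneg hΦ k
  have hSC0 : 0 ≤ SC := Real.sqrt_nonneg _
  have hSN0 : 0 ≤ SN := Real.sqrt_nonneg _
  -- componentwise bound
  have hcomp : ∀ j : Fin d, |Φ n x j - stepApprox A Φ pt k n x j| ≤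
      ((n : ℝ) * V + n * C j) / k + 2 * k * PhiNorm A (fun n x => Φ n x j) (C j)
        + C j := by
    intro j
    set g : ℕ → ℝ := fun i => Φ k (pt (wordPrefix ((shiftT A)^[i] x) k)) j with hgdef
    have hstep : stepApprox A Φ pt k n x j = (k : ℝ)⁻¹ * ∑ i ∈ Finset.range n, g i := by
      show (∑ i ∈ Finset.range n, stepFn A Φ pt k ((shiftT A)^[i] x)) j = _
      rw [WithLp.ofLp_sum, Finset.sum_apply]
      rw [Finset.mul_sum]
      apply Finset.sum_congr rfl
      intro i _
      show ((k : ℝ)⁻¹ • Φ k (pt (wordPrefix ((shiftT A)^[i] x) k))) j = _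
      rw [PiLp.smul_apply, smul_eq_mul]
    have hg : ∀ i, |g i - Φ k ((shiftT A)^[i] x) j| ≤ V := by
      intro i
      have hpre : wordPrefix (pt (wordPrefix ((shiftT A)^[i] x) k)) k
          = wordPrefix ((shiftT A)^[i] x) k :=
        mem_cyl_prefix_iff.1 (hpt ((shiftT A)^[i] x) k)
      have h1 : |g i - Φ k ((shiftT A)^[i] x) j|
          = |(Φ k (pt (wordPrefix ((shiftT A)^[i] x) k)) - Φ k ((shiftT A)^[i] x)) j| :=
        rfl
      rw [h1]
      exact le_trans (abs_apply_le_enorm _ j) (le_varN hΦ hpre)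
    have := key_scalar (hΦ j) hk n x g hg
    rw [hstep]
    exact this
  -- assemble
  have hNle : ∀ j : Fin d, PhiNorm A (fun n x => Φ n x j) (C j) ≤ SN := by
    intro j
    rw [hSN, ← Real.sqrt_sq phiNorm_nonneg]
    exact Real.sqrt_le_sqrt (Finset.single_le_sum
      (f := fun i => PhiNorm A (fun n x => Φ n x i) (C i) ^ 2)
      (fun i _ => sq_nonneg _) (Finset.mem_univ j))
  have hCle : ∀ j : Fin d, C j ≤ SC := by
    intro j
    rw [hSC, ← Real.sqrt_sq (le_of_lt (hΦ j).posC)]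
    exact Real.sqrt_le_sqrt (Finset.single_le_sum
      (f := fun i => C i ^ 2) (fun i _ => sq_nonneg _) (Finset.mem_univ j))
  calc ‖Φ n x - stepApprox A Φ pt k n x‖
      ≤ ∑ j, |(Φ n x - stepApprox A Φ pt k n x) j| := enorm_le_sum_abs _
  _ ≤ ∑ _j : Fin d, (((n : ℝ) / k) * SC + 5 * k * SN + (V / k) * n) := by
      apply Finset.sum_le_sum
      intro j _
      have h1 : (Φ n x - stepApprox A Φ pt k n x) j
          = Φ n x j - stepApprox A Φ pt k n x j := rfl
      rw [h1]
      refine le_trans (hcomp j) ?_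
      have hCN : C j ≤ PhiNorm A (fun n x => Φ n x j) (C j) := c_le_phiNorm (hΦ j)
      have hN0 : 0 ≤ PhiNorm A (fun n x => Φ n x j) (C j) := phiNorm_nonneg
      have e1 : ((n : ℝ) * V + n * C j) / k = (V / k) * n + (n / k) * C j := by
        field_simp
      rw [e1]
      have b1 : ((n : ℝ) / k) * C j ≤ ((n : ℝ) / k) * SC :=
        mul_le_mul_of_nonneg_left (hCle j) (by positivity)
      have b2 : 2 * (k : ℝ) * PhiNorm A (fun n x => Φ n x j) (C j) + C j
          ≤ 5 * k * SN := by
        have h2 : 2 * (k : ℝ) * PhiNorm A (fun n x => Φ n x j) (C j) ≤ 2 * k * SN :=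
          mul_le_mul_of_nonneg_left (hNle j) (by positivity)
        have h3 : C j ≤ SN := le_trans hCN (hNle j)
        nlinarith [hSN0, hk1]
      linarith
  _ = (d : ℝ) * (((n : ℝ) / k) * SC + 5 * k * SN + (V / k) * n) := by
      rw [Finset.sum_const, Finset.card_univ, Fintype.card_fin, nsmul_eq_mul]

end AuxPart2
section AuxPart13

variable {m d : ℕ} {A : Matrix (Fin m) (Fin m) ℕ}
  {Φ : ℕ → Subshift A → EuclideanSpace ℝ (Fin d)} {C : Fin d → ℝ}

lemma part_one [Nonempty (Subshift A)] (hΦ : AlmostAdditiveVec A Φ C)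
    (pt : List (Fin m) → Subshift A) {k : ℕ} (hk : 0 < k) (j : Fin d) :
    PhiMin A (fun n x => Φ n x j) (C j) ≤
        sInf (Set.range fun x => stepFn A Φ pt k x j) ∧
      sInf (Set.range fun x => stepFn A Φ pt k x j) ≤
        sSup (Set.range fun x => stepFn A Φ pt k x j) ∧
      sSup (Set.range fun x => stepFn A Φ pt k x j) ≤
        PhiMax A (fun n x => Φ n x j) (C j) := by
  have hkR : (0 : ℝ) < k := by exact_mod_cast hk
  have hlow : ∀ x : Subshift A, PhiMin A (fun n x => Φ n x j) (C j) ≤ stepFn A Φ pt k x j := by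
    intro x
    have h1 : (k : ℝ) * PhiMin A (fun n x => Φ n x j) (C j) ≤ Φ k (pt (wordPrefix x k)) j :=
      phiMin_le (hΦ j) k (pt (wordPrefix x k))
    have h2 : stepFn A Φ pt k x j = (k : ℝ)⁻¹ * Φ k (pt (wordPrefix x k)) j := by
      show ((k : ℝ)⁻¹ • Φ k (pt (wordPrefix x k))) j = _
      rw [PiLp.smul_apply, smul_eq_mul]
    rw [h2]
    calc PhiMin A (fun n x => Φ n x j) (C j)
        = (k : ℝ)⁻¹ * ((k : ℝ) * PhiMin A (fun n x => Φ n x j) (C j)) := by field_simp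
    _ ≤ (k : ℝ)⁻¹ * Φ k (pt (wordPrefix x k)) j :=
        mul_le_mul_of_nonneg_left h1 (by positivity)
  have hhigh : ∀ x : Subshift A, stepFn A Φ pt k x j ≤ PhiMax A (fun n x => Φ n x j) (C j) := by
    intro x
    have h1 : Φ k (pt (wordPrefix x k)) j ≤ (k : ℝ) * PhiMax A (fun n x => Φ n x j) (C j) :=
      le_phiMax (hΦ j) k (pt (wordPrefix x k))
    have h2 : stepFn A Φ pt k x j = (k : ℝ)⁻¹ * Φ k (pt (wordPrefix x k)) j := by
      show ((k : ℝ)⁻¹ • Φ k (pt (wordPrefix x k))) j = _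
      rw [PiLp.smul_apply, smul_eq_mul]
    rw [h2]
    calc (k : ℝ)⁻¹ * Φ k (pt (wordPrefix x k)) j
        ≤ (k : ℝ)⁻¹ * ((k : ℝ) * PhiMax A (fun n x => Φ n x j) (C j)) := by
          apply mul_le_mul_of_nonneg_left h1 (by positivity)
    _ = PhiMax A (fun n x => Φ n x j) (C j) := by field_simp
  have hne : (Set.range fun x : Subshift A => stepFn A Φ pt k x j).Nonempty :=
    Set.range_nonempty _
  have hbdd : BddAbove (Set.range fun x : Subshift A => stepFn A Φ pt k x j) := by
    refine ⟨PhiMax A (fun n x => Φ n x j) (C j), ?_⟩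
    rintro r ⟨x, rfl⟩
    exact hhigh x
  have hbddb : BddBelow (Set.range fun x : Subshift A => stepFn A Φ pt k x j) := by
    refine ⟨PhiMin A (fun n x => Φ n x j) (C j), ?_⟩
    rintro r ⟨x, rfl⟩
    exact hlow x
  refine ⟨le_csInf hne ?_, csInf_le_csSup hne hbddb hbdd, csSup_le hne ?_⟩
  · rintro r ⟨x, rfl⟩
    exact hlow x
  · rintro r ⟨x, rfl⟩
    exact hhigh x

lemma blocks {φ : ℕ → Subshift A → ℝ} {c : ℝ} (h : AlmostAdditive A φ c)
    (k₀ : ℕ) : ∀ (q r : ℕ) (x : Subshift A),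
    |φ (q * k₀ + r) x - (∑ i ∈ Finset.range q, φ k₀ ((shiftT A)^[i * k₀] x)
      + φ r ((shiftT A)^[q * k₀] x))| ≤ q * c := by
  intro q
  induction q with
  | zero => intro r x; simp
  | succ q ih =>
    intro r x
    have hsplit : (q + 1) * k₀ + r = k₀ + (q * k₀ + r) := by ring
    have hu := h.upper k₀ (q * k₀ + r) x
    have hl := h.lower k₀ (q * k₀ + r) x
    rw [← hsplit] at hu hl
    have hih := ih r ((shiftT A)^[k₀] x)
    -- rewrite iterates
    have hit : ∀ i : ℕ, (shiftT A)^[i * k₀] ((shiftT A)^[k₀] x)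
        = (shiftT A)^[(i + 1) * k₀] x := by
      intro i
      rw [← Function.iterate_add_apply]
      congr 1
      ring
    rw [hit q] at hih
    have hsum : ∑ i ∈ Finset.range q, φ k₀ ((shiftT A)^[i * k₀] ((shiftT A)^[k₀] x))
        = ∑ i ∈ Finset.range q, φ k₀ ((shiftT A)^[(i + 1) * k₀] x) :=
      Finset.sum_congr rfl fun i _ => by rw [hit i]
    rw [hsum] at hih
    have hsum2 : ∑ i ∈ Finset.range (q + 1), φ k₀ ((shiftT A)^[i * k₀] x)
        = (∑ i ∈ Finset.range q, φ k₀ ((shiftT A)^[(i + 1) * k₀] x)) + φ k₀ x := by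
      rw [Finset.sum_range_succ']
      simp
    rw [hsum2]
    rw [abs_le] at hih ⊢
    push_cast
    constructor <;> [nlinarith [hih.1, hih.2]; nlinarith [hih.1, hih.2]]

lemma continuous_vec (hΦ : AlmostAdditiveVec A Φ C) (k : ℕ) : Continuous (Φ k) := by
  have h : Continuous fun x : Subshift A => ((fun j => Φ k x j) : Fin d → ℝ) :=
    continuous_pi fun j => (hΦ j).cont k
  exact ((PiLp.continuousLinearEquiv 2 ℝ (fun _ : Fin d => ℝ)).symm.continuous.comp h :)

lemma uniform_modulus {k : ℕ} (hcont : Continuous (Φ k)) {ε : ℝ} (hε : 0 < ε) :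
    ∃ L : ℕ, ∀ x y : Subshift A, wordPrefix x L = wordPrefix y L →
      ‖Φ k x - Φ k y‖ ≤ ε := by
  by_contra hc
  push_neg at hc
  set K : ℕ → Set (Subshift A × Subshift A) := fun l =>
    {p | ∀ i < l, p.1.1 i = p.2.1 i} ∩ {p | ε ≤ ‖Φ k p.1 - Φ k p.2‖} with hK
  have hsub : ∀ l, K (l + 1) ⊆ K l :=
    fun l p hp => ⟨fun i hi => hp.1 i (by omega), hp.2⟩
  have hne : ∀ l, (K l).Nonempty := by
    intro l
    obtain ⟨x, y, hpre, hgt⟩ := hc l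
    exact ⟨(x, y), wordPrefix_eq_iff.1 hpre, le_of_lt hgt⟩
  have hclosed : ∀ l, IsClosed (K l) := by
    intro l
    apply IsClosed.inter
    · have : {p : Subshift A × Subshift A | ∀ i < l, p.1.1 i = p.2.1 i}
          = ⋂ i ∈ Finset.range l, {p : Subshift A × Subshift A | p.1.1 i = p.2.1 i} := by
        ext p; simp [Finset.mem_range]
      rw [this]
      refine isClosed_biInter fun i _ => isClosed_eq ?_ ?_
      · exact ((continuous_apply i).comp continuous_subtype_val).comp continuous_fst
      · exact ((continuous_apply i).comp continuous_subtype_val).comp continuous_snd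
    · exact isClosed_le continuous_const
        (((hcont.comp continuous_fst).sub (hcont.comp continuous_snd)).norm)
  obtain ⟨p, hp⟩ := IsCompact.nonempty_iInter_of_sequence_nonempty_isCompact_isClosed
    K hsub hne ((hclosed 0).isCompact) hclosed
  have heq : p.1 = p.2 := by
    apply Subtype.ext
    funext i
    exact (Set.mem_iInter.1 hp (i + 1)).1 i (by omega)
  have h2 := (Set.mem_iInter.1 hp 0).2
  simp only [Set.mem_setOf_eq] at h2
  rw [heq] at h2
  simp at h2
  linarith

end AuxPart13
section AuxVar

variable {m d : ℕ} {A : Matrix (Fin m) (Fin m) ℕ}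
  {Φ : ℕ → Subshift A → EuclideanSpace ℝ (Fin d)} {C : Fin d → ℝ}

lemma main_block_bound [Nonempty (Subshift A)] (hΦ : AlmostAdditiveVec A Φ C)
    {k₀ L : ℕ} (hk₀ : 0 < k₀) {δ : ℝ} (hδ0 : 0 ≤ δ)
    (hL : ∀ u v : Subshift A, wordPrefix u L = wordPrefix v L → ‖Φ k₀ u - Φ k₀ v‖ ≤ δ)
    (k : ℕ) :
    varN A (Φ k) k ≤ 2 * (k / k₀ : ℕ) * (∑ j, C j) + (k / k₀ : ℕ) * ((d : ℝ) * δ)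
      + 2 * k₀ * (∑ j, PhiNorm A (fun n x => Φ n x j) (C j)) * (L + 1) := by
  set q := k / k₀ with hq
  set r := k % k₀ with hr
  set cbar := ∑ j, C j with hcbar
  set Nbar := ∑ j, PhiNorm A (fun n x => Φ n x j) (C j) with hNbar
  have hqk : q * k₀ + r = k := by rw [mul_comm]; exact Nat.div_add_mod k k₀
  have hrk : r < k₀ := Nat.mod_lt k hk₀
  have hNbar0 : (0 : ℝ) ≤ Nbar := Finset.sum_nonneg fun j _ => phiNorm_nonneg
  have hNj : ∀ j : Fin d, PhiNorm A (fun n x => Φ n x j) (C j) ≤ Nbar := by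
    intro j
    exact Finset.single_le_sum (f := fun i => PhiNorm A (fun n x => Φ n x i) (C i))
      (fun i _ => phiNorm_nonneg) (Finset.mem_univ j)
  obtain ⟨x0⟩ := ‹Nonempty (Subshift A)›
  refine csSup_le ⟨‖Φ k x0 - Φ k x0‖, ⟨x0, x0, rfl, rfl⟩⟩ ?_
  rintro s ⟨x, y, hpre, rfl⟩
  have hxy : ∀ i < k, x.1 i = y.1 i := wordPrefix_eq_iff.1 hpre
  -- abbreviations
  set D : ℕ → Fin d → ℝ := fun i j =>
    Φ k₀ ((shiftT A)^[i * k₀] x) j - Φ k₀ ((shiftT A)^[i * k₀] y) j with hD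
  set R : Fin d → ℝ := fun j =>
    Φ r ((shiftT A)^[q * k₀] x) j - Φ r ((shiftT A)^[q * k₀] y) j with hR
  -- step A : componentwise block bound
  have hcomp : ∀ j : Fin d, |Φ k x j - Φ k y j| ≤
      2 * q * C j + (∑ i ∈ Finset.range q, |D i j|) + |R j| := by
    intro j
    have b1 := blocks (hΦ j) k₀ q r x
    have b2 := blocks (hΦ j) k₀ q r y
    rw [hqk] at b1 b2
    have tri : |(∑ i ∈ Finset.range q, Φ k₀ ((shiftT A)^[i * k₀] x) j
          + Φ r ((shiftT A)^[q * k₀] x) j)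
        - (∑ i ∈ Finset.range q, Φ k₀ ((shiftT A)^[i * k₀] y) j
          + Φ r ((shiftT A)^[q * k₀] y) j)|
        ≤ (∑ i ∈ Finset.range q, |D i j|) + |R j| := by
      have e : (∑ i ∈ Finset.range q, Φ k₀ ((shiftT A)^[i * k₀] x) j
          + Φ r ((shiftT A)^[q * k₀] x) j)
        - (∑ i ∈ Finset.range q, Φ k₀ ((shiftT A)^[i * k₀] y) j
          + Φ r ((shiftT A)^[q * k₀] y) j)
        = (∑ i ∈ Finset.range q, D i j) + R j := by
        rw [Finset.sum_sub_distrib]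
        simp only [hD, hR]
        ring
      rw [e]
      calc |(∑ i ∈ Finset.range q, D i j) + R j|
          ≤ |∑ i ∈ Finset.range q, D i j| + |R j| := abs_add_le _ _
      _ ≤ (∑ i ∈ Finset.range q, |D i j|) + |R j| := by
          have := Finset.abs_sum_le_sum_abs (fun i => D i j) (Finset.range q)
          linarith
    rw [abs_le] at b1 b2
    rw [abs_le] at tri ⊢
    constructor <;> [nlinarith [b1.1, b2.2, tri.1, tri.2]; nlinarith [b1.2, b2.1, tri.1, tri.2]]
  -- bounds on D sums
  have hall : ∀ i : ℕ, (∑ j, |D i j|) ≤ 2 * k₀ * Nbar := by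
    intro i
    calc ∑ j, |D i j| ≤ ∑ j, 2 * (k₀ : ℝ) * PhiNorm A (fun n x => Φ n x j) (C j) := by
          apply Finset.sum_le_sum
          intro j _
          have h1 : |Φ k₀ ((shiftT A)^[i * k₀] x) j|
              ≤ k₀ * PhiNorm A (fun n x => Φ n x j) (C j) := abs_le_phiNorm (hΦ j) k₀ _
          have h2 : |Φ k₀ ((shiftT A)^[i * k₀] y) j|
              ≤ k₀ * PhiNorm A (fun n x => Φ n x j) (C j) := abs_le_phiNorm (hΦ j) k₀ _
          calc |D i j| ≤ |Φ k₀ ((shiftT A)^[i * k₀] x) j|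
              + |Φ k₀ ((shiftT A)^[i * k₀] y) j| := abs_sub _ _
          _ ≤ 2 * (k₀ : ℝ) * PhiNorm A (fun n x => Φ n x j) (C j) := by linarith
    _ = 2 * k₀ * Nbar := by rw [hNbar, Finset.mul_sum]
  have hgood : ∀ i : ℕ, i < q - L → (∑ j, |D i j|) ≤ (d : ℝ) * δ := by
    intro i hi
    have hpre' : wordPrefix ((shiftT A)^[i * k₀] x) L = wordPrefix ((shiftT A)^[i * k₀] y) L := by
      rw [wordPrefix_eq_iff]
      intro t ht
      rw [shift_iterate_apply, shift_iterate_apply]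
      apply hxy
      -- t + i * k₀ < k
      have f1 : (L + i) * k₀ ≤ q * k₀ := Nat.mul_le_mul_right _ (by omega)
      have f2 : q * k₀ ≤ k := by omega
      have f3 : L ≤ L * k₀ := Nat.le_mul_of_pos_right L hk₀
      have f4 : (L + i) * k₀ = L * k₀ + i * k₀ := by ring
      omega
    have hnorm := hL _ _ hpre'
    calc ∑ j, |D i j| ≤ ∑ _j : Fin d,
        ‖Φ k₀ ((shiftT A)^[i * k₀] x) - Φ k₀ ((shiftT A)^[i * k₀] y)‖ := by
          apply Finset.sum_le_sum
          intro j _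
          exact abs_apply_le_enorm (Φ k₀ ((shiftT A)^[i * k₀] x) - Φ k₀ ((shiftT A)^[i * k₀] y)) j
    _ = (d : ℝ) * ‖Φ k₀ ((shiftT A)^[i * k₀] x) - Φ k₀ ((shiftT A)^[i * k₀] y)‖ := by
        rw [Finset.sum_const, Finset.card_univ, Fintype.card_fin, nsmul_eq_mul]
    _ ≤ (d : ℝ) * δ := mul_le_mul_of_nonneg_left hnorm (Nat.cast_nonneg d)
  -- sum over blocks
  have hDsum : ∑ i ∈ Finset.range q, (∑ j, |D i j|)
      ≤ q * ((d : ℝ) * δ) + L * (2 * k₀ * Nbar) := by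
    have hsplit : ∑ i ∈ Finset.range q, (∑ j, |D i j|)
        = ∑ i ∈ Finset.Ico 0 (q - L), (∑ j, |D i j|)
          + ∑ i ∈ Finset.Ico (q - L) q, (∑ j, |D i j|) := by
      rw [Finset.sum_Ico_consecutive _ (Nat.zero_le _) (Nat.sub_le q L),
        ← Finset.range_eq_Ico]
    rw [hsplit]
    have hb1 : ∑ i ∈ Finset.Ico 0 (q - L), (∑ j, |D i j|) ≤ (q - L : ℕ) * ((d : ℝ) * δ) := by
      have := Finset.sum_le_card_nsmul (Finset.Ico 0 (q - L)) (fun i => ∑ j, |D i j|)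
        ((d : ℝ) * δ) (fun i hi => hgood i (by simpa using (Finset.mem_Ico.1 hi).2))
      rwa [Nat.card_Ico, Nat.sub_zero, nsmul_eq_mul] at this
    have hb2 : ∑ i ∈ Finset.Ico (q - L) q, (∑ j, |D i j|)
        ≤ (L : ℝ) * (2 * k₀ * Nbar) := by
      have h1 := Finset.sum_le_card_nsmul (Finset.Ico (q - L) q) (fun i => ∑ j, |D i j|)
        (2 * k₀ * Nbar) (fun i _ => hall i)
      rw [Nat.card_Ico, nsmul_eq_mul] at h1
      have h2 : ((q - (q - L) : ℕ) : ℝ) ≤ L := by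
        have : q - (q - L) ≤ L := by omega
        exact_mod_cast this
      have h3 : (0 : ℝ) ≤ 2 * k₀ * Nbar := by positivity
      nlinarith
    have h4 : ((q - L : ℕ) : ℝ) ≤ q := by exact_mod_cast Nat.sub_le q L
    have h5 : (0 : ℝ) ≤ (d : ℝ) * δ := by positivity
    nlinarith
  -- remainder
  have hRsum : (∑ j, |R j|) ≤ 2 * k₀ * Nbar := by
    calc ∑ j, |R j| ≤ ∑ j, 2 * (r : ℝ) * PhiNorm A (fun n x => Φ n x j) (C j) := by
          apply Finset.sum_le_sum
          intro j _
          have h1 : |Φ r ((shiftT A)^[q * k₀] x) j|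
              ≤ r * PhiNorm A (fun n x => Φ n x j) (C j) := abs_le_phiNorm (hΦ j) r _
          have h2 : |Φ r ((shiftT A)^[q * k₀] y) j|
              ≤ r * PhiNorm A (fun n x => Φ n x j) (C j) := abs_le_phiNorm (hΦ j) r _
          calc |R j| ≤ |Φ r ((shiftT A)^[q * k₀] x) j|
              + |Φ r ((shiftT A)^[q * k₀] y) j| := abs_sub _ _
          _ ≤ 2 * (r : ℝ) * PhiNorm A (fun n x => Φ n x j) (C j) := by linarith
    _ ≤ ∑ j, 2 * (k₀ : ℝ) * PhiNorm A (fun n x => Φ n x j) (C j) := by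
        apply Finset.sum_le_sum
        intro j _
        have : (r : ℝ) ≤ k₀ := by exact_mod_cast le_of_lt hrk
        nlinarith [phiNorm_nonneg (A := A) (φ := fun n x => Φ n x j) (c := C j)]
    _ = 2 * k₀ * Nbar := by rw [hNbar, Finset.mul_sum]
  -- assemble
  calc ‖Φ k x - Φ k y‖ ≤ ∑ j, |(Φ k x - Φ k y) j| := enorm_le_sum_abs _
  _ = ∑ j, |Φ k x j - Φ k y j| := rfl
  _ ≤ ∑ j, (2 * q * C j + (∑ i ∈ Finset.range q, |D i j|) + |R j|) :=
      Finset.sum_le_sum fun j _ => hcomp j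
  _ = 2 * q * cbar + (∑ j, ∑ i ∈ Finset.range q, |D i j|) + ∑ j, |R j| := by
      rw [Finset.sum_add_distrib, Finset.sum_add_distrib, hcbar, Finset.mul_sum]
  _ = 2 * q * cbar + (∑ i ∈ Finset.range q, ∑ j, |D i j|) + ∑ j, |R j| := by
      rw [Finset.sum_comm]
  _ ≤ 2 * q * cbar + (q * ((d : ℝ) * δ) + L * (2 * k₀ * Nbar)) + 2 * k₀ * Nbar := by
      linarith
  _ = 2 * q * cbar + q * ((d : ℝ) * δ) + 2 * k₀ * Nbar * (L + 1) := by ring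

lemma varN_div_tendsto [Nonempty (Subshift A)] (hΦ : AlmostAdditiveVec A Φ C) :
    Tendsto (fun k : ℕ => varN A (Φ k) k / k) atTop (𝓝 0) := by
  rw [NormedAddCommGroup.tendsto_nhds_zero]
  intro ε hε
  set cbar := ∑ j, C j with hcbar
  set Nbar := ∑ j, PhiNorm A (fun n x => Φ n x j) (C j) with hNbar
  have hcbar0 : (0 : ℝ) ≤ cbar :=
    Finset.sum_nonneg fun j _ => le_of_lt (hΦ j).posC
  have hNbar0 : (0 : ℝ) ≤ Nbar := Finset.sum_nonneg fun j _ => phiNorm_nonneg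
  obtain ⟨k₀, hk₀big⟩ := exists_nat_gt (8 * (cbar + 1) / ε)
  have hk₀pos : 0 < k₀ := by
    by_contra hc
    push_neg at hc
    interval_cases k₀
    · simp at hk₀big
      nlinarith [div_pos (by linarith : (0:ℝ) < 8 * (cbar + 1)) hε]
  have hk₀R : (0 : ℝ) < k₀ := by exact_mod_cast hk₀pos
  have h2c : 2 * cbar / k₀ ≤ ε / 4 := by
    rw [div_le_div_iff₀ hk₀R (by norm_num : (0:ℝ) < 4)]
    have h1 : 8 * (cbar + 1) / ε < k₀ := hk₀big
    rw [div_lt_iff₀ hε] at h1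
    nlinarith
  set δ := ε * k₀ / (4 * ((d : ℝ) + 1)) with hδdef
  have hδpos : 0 < δ := by
    apply div_pos (by positivity)
    positivity
  obtain ⟨L, hL⟩ := uniform_modulus (continuous_vec hΦ k₀) hδpos
  set E := 2 * (k₀ : ℝ) * Nbar * (L + 1) with hE
  have hEev : ∀ᶠ k : ℕ in atTop, E / k < ε / 4 :=
    Filter.Tendsto.eventually_lt_const (by positivity)
      (tendsto_const_div_atTop_nhds_zero_nat E)
  filter_upwards [hEev, eventually_ge_atTop 1] with k hEk hk1
  have hkR : (0 : ℝ) < k := by exact_mod_cast hk1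
  set q := k / k₀ with hqdef
  have hbound := main_block_bound hΦ hk₀pos (le_of_lt hδpos) hL k
  rw [← hcbar, ← hNbar, ← hE, ← hqdef] at hbound
  have hV0 : 0 ≤ varN A (Φ k) k := varN_nonneg hΦ k
  have hqk : (q : ℝ) * k₀ ≤ k := by exact_mod_cast Nat.div_mul_le_self k k₀
  have hqK : (q : ℝ) / k ≤ 1 / k₀ := by
    rw [div_le_div_iff₀ hkR hk₀R]
    nlinarith
  have hnorm : ‖varN A (Φ k) k / (k : ℝ)‖ = varN A (Φ k) k / k := by
    rw [Real.norm_eq_abs, abs_of_nonneg (div_nonneg hV0 (le_of_lt hkR))]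
  rw [hnorm]
  have hsplit : varN A (Φ k) k / k
      ≤ (2 * q * cbar) / k + (q * ((d : ℝ) * δ)) / k + E / k := by
    rw [← add_div, ← add_div]
    exact (div_le_div_iff_of_pos_right hkR).mpr hbound
  have hq0 : (0 : ℝ) ≤ q := Nat.cast_nonneg q
  have t1 : (2 * (q : ℝ) * cbar) / k ≤ ε / 4 := by
    have : (2 * (q : ℝ) * cbar) / k = (2 * cbar) * ((q : ℝ) / k) := by ring
    rw [this]
    calc (2 * cbar) * ((q : ℝ) / k) ≤ (2 * cbar) * (1 / k₀) :=
        mul_le_mul_of_nonneg_left hqK (by linarith)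
    _ = 2 * cbar / k₀ := by ring
    _ ≤ ε / 4 := h2c
  have t2 : ((q : ℝ) * ((d : ℝ) * δ)) / k ≤ ε / 4 := by
    have e1 : ((q : ℝ) * ((d : ℝ) * δ)) / k = ((d : ℝ) * δ) * ((q : ℝ) / k) := by ring
    rw [e1]
    have h3 : ((d : ℝ) * δ) * ((q : ℝ) / k) ≤ ((d : ℝ) * δ) * (1 / k₀) :=
      mul_le_mul_of_nonneg_left hqK (by positivity)
    have h4 : ((d : ℝ) * δ) * (1 / k₀) ≤ ε / 4 := by
      have heq : ((d : ℝ) * δ) * (1 / k₀) = ε * ((d : ℝ) / (4 * ((d : ℝ) + 1))) := by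
        rw [hδdef]
        field_simp
      rw [heq]
      have h5 : (d : ℝ) / (4 * ((d : ℝ) + 1)) ≤ 1 / 4 := by
        rw [div_le_div_iff₀ (by positivity) (by norm_num : (0:ℝ) < 4)]
        nlinarith [Nat.cast_nonneg (α := ℝ) d]
      calc ε * ((d : ℝ) / (4 * ((d : ℝ) + 1))) ≤ ε * (1 / 4) :=
          mul_le_mul_of_nonneg_left h5 hε.le
      _ = ε / 4 := by ring
    linarith
  linarith

end AuxVar
section AuxFinal

variable {m d : ℕ} {A : Matrix (Fin m) (Fin m) ℕ}
  {Φ : ℕ → Subshift A → EuclideanSpace ℝ (Fin d)} {C : Fin d → ℝ}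

lemma limNorm_bounds [Nonempty (Subshift A)] (hΦ : AlmostAdditiveVec A Φ C)
    (pt : List (Fin m) → Subshift A)
    (hpt : ∀ (x : Subshift A) (k : ℕ), pt (wordPrefix x k) ∈ cyl A (wordPrefix x k))
    {k : ℕ} (hk : 0 < k) :
    0 ≤ limNorm A Φ (stepApprox A Φ pt k) ∧
    limNorm A Φ (stepApprox A Φ pt k) ≤
      (d : ℝ) * Real.sqrt (∑ j, (C j) ^ 2) / k + (d : ℝ) * (varN A (Φ k) k / k) := by
  set SC := Real.sqrt (∑ j, (C j) ^ 2) with hSC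
  set SN := Real.sqrt (∑ j, (PhiNorm A (fun n x => Φ n x j) (C j)) ^ 2) with hSN
  set V := varN A (Φ k) k with hV
  have hkR : (0 : ℝ) < k := by exact_mod_cast hk
  have hV0 : 0 ≤ V := varN_nonneg hΦ k
  have hSC0 : 0 ≤ SC := Real.sqrt_nonneg _
  have hSN0 : 0 ≤ SN := Real.sqrt_nonneg _
  set B := (d : ℝ) * SC / k + (d : ℝ) * (V / k) with hB
  set G := (d : ℝ) * (5 * k * SN) with hG
  have hG0 : 0 ≤ G := by positivity
  set u : ℕ → ℝ := fun n =>
    supNorm A (fun x => Φ n x - stepApprox A Φ pt k n x) / n with hu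
  have hlim : limNorm A Φ (stepApprox A Φ pt k) = Filter.limsup u atTop := rfl
  obtain ⟨x0⟩ := ‹Nonempty (Subshift A)›
  have hbddS : ∀ n : ℕ, BddAbove (Set.range fun x : Subshift A =>
      ‖Φ n x - stepApprox A Φ pt k n x‖) := by
    intro n
    refine ⟨(d : ℝ) * (((n : ℝ) / k) * SC + 5 * k * SN + (V / k) * n), ?_⟩
    rintro r ⟨x, rfl⟩
    exact part_two hΦ pt hpt hk n x
  have hS0 : ∀ n : ℕ, 0 ≤ supNorm A (fun x => Φ n x - stepApprox A Φ pt k n x) := by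
    intro n
    exact le_trans (norm_nonneg _) (le_csSup (hbddS n) ⟨x0, rfl⟩)
  have hu0 : ∀ n : ℕ, 0 ≤ u n := fun n => div_nonneg (hS0 n) (Nat.cast_nonneg n)
  have hSle : ∀ n : ℕ, supNorm A (fun x => Φ n x - stepApprox A Φ pt k n x)
      ≤ (d : ℝ) * (((n : ℝ) / k) * SC + 5 * k * SN + (V / k) * n) := by
    intro n
    refine csSup_le (Set.range_nonempty _) ?_
    rintro r ⟨x, rfl⟩
    exact part_two hΦ pt hpt hk n x
  have hule : ∀ n : ℕ, 1 ≤ n → u n ≤ B + G / n := by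
    intro n hn
    have hnR : (0 : ℝ) < n := by exact_mod_cast hn
    have h1 : u n ≤ (d : ℝ) * (((n : ℝ) / k) * SC + 5 * k * SN + (V / k) * n) / n :=
      (div_le_div_iff_of_pos_right hnR).mpr (hSle n)
    have h2 : (d : ℝ) * (((n : ℝ) / k) * SC + 5 * k * SN + (V / k) * n) / n
        = B + G / n := by
      rw [hB, hG]
      field_simp
      ring
    linarith [h1, h2 ▸ h1]
  have hGlim : Tendsto (fun n : ℕ => G / n) atTop (𝓝 0) :=
    tendsto_const_div_atTop_nhds_zero_nat G
  constructor
  · rw [hlim]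
    refine le_limsup_of_frequently_le ((Filter.Eventually.of_forall hu0).frequently) ?_
    refine isBoundedUnder_of_eventually_le (a := B + G) ?_
    filter_upwards [eventually_ge_atTop 1] with n hn
    have h3 : G / n ≤ G := by
      have hnR : (1 : ℝ) ≤ n := by exact_mod_cast hn
      calc G / n ≤ G / 1 := by
            apply div_le_div_of_nonneg_left hG0 one_pos hnR
      _ = G := div_one G
    show u n ≤ B + G
    calc u n ≤ B + G / n := hule n hn
    _ ≤ B + G := by linarith
  · rw [hlim]
    refine le_of_forall_pos_le_add fun ε hε => ?_
    refine limsup_le_of_le (isCoboundedUnder_le_of_eventually_le atTop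
      (Filter.Eventually.of_forall hu0)) ?_
    filter_upwards [eventually_ge_atTop 1, hGlim.eventually (gt_mem_nhds hε)] with n hn hGn
    show u n ≤ B + ε
    calc u n ≤ B + G / n := hule n hn
    _ ≤ B + ε := by linarith

end AuxFinal

/-- Properties of the Hölder (step) approximations `Φ^{(k)}` of an
almost additive potential `Φ`: comparison of the extreme values, a quantitative
uniform bound `‖φ_n − S_nφ̃_k‖_∞ ≤ d((n/k)|C(Φ)| + 5k‖Φ‖ + (‖Φ‖_k/k) n)`, and the
convergence `‖Φ − Φ^{(k)}‖_lim → 0`. -/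
theorem statement11 {m d : ℕ} (hm : 0 < m) (A : Matrix (Fin m) (Fin m) ℕ) (hA : Mixing A)
    (Φ : ℕ → Subshift A → EuclideanSpace ℝ (Fin d)) (C : Fin d → ℝ)
    (hΦ : AlmostAdditiveVec A Φ C)
    (pt : List (Fin m) → Subshift A)
    (hpt : ∀ (x : Subshift A) (k : ℕ), pt (wordPrefix x k) ∈ cyl A (wordPrefix x k)) :
    (∀ k : ℕ, 0 < k → ∀ j : Fin d,
      PhiMin A (fun n x => Φ n x j) (C j) ≤
        sInf (Set.range fun x => stepFn A Φ pt k x j) ∧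
      sInf (Set.range fun x => stepFn A Φ pt k x j) ≤
        sSup (Set.range fun x => stepFn A Φ pt k x j) ∧
      sSup (Set.range fun x => stepFn A Φ pt k x j) ≤
        PhiMax A (fun n x => Φ n x j) (C j)) ∧
    (∀ k : ℕ, 0 < k → ∀ (n : ℕ) (x : Subshift A),
      ‖Φ n x - stepApprox A Φ pt k n x‖ ≤
        (d : ℝ) * (((n : ℝ) / k) * Real.sqrt (∑ j, (C j) ^ 2) +
          5 * k * Real.sqrt (∑ j, (PhiNorm A (fun n x => Φ n x j) (C j)) ^ 2) +
          (varN A (Φ k) k / k) * n)) ∧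
    Tendsto (fun k : ℕ => limNorm A Φ (stepApprox A Φ pt k)) atTop (𝓝 0) := by
  haveI : Nonempty (Subshift A) := nonempty_subshift_s11 hm hA
  refine ⟨fun k hk j => part_one hΦ pt hk j,
    fun k hk n x => part_two hΦ pt hpt hk n x, ?_⟩
  set SC := Real.sqrt (∑ j, (C j) ^ 2) with hSC
  have hTend : Tendsto (fun k : ℕ => (d : ℝ) * SC / k + (d : ℝ) * (varN A (Φ k) k / k))
      atTop (𝓝 0) := by
    have T1 : Tendsto (fun k : ℕ => (d : ℝ) * SC / k) atTop (𝓝 0) :=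
      tendsto_const_div_atTop_nhds_zero_nat ((d : ℝ) * SC)
    have T2 : Tendsto (fun k : ℕ => (d : ℝ) * (varN A (Φ k) k / k)) atTop (𝓝 0) := by
      have := (varN_div_tendsto hΦ).const_mul (d : ℝ)
      simpa using this
    simpa using T1.add T2
  refine tendsto_of_tendsto_of_tendsto_of_le_of_le' tendsto_const_nhds hTend ?_ ?_
  · filter_upwards [eventually_ge_atTop 1] with k hk
    exact (limNorm_bounds hΦ pt hpt hk).1
  · filter_upwards [eventually_ge_atTop 1] with k hk
    exact (limNorm_bounds hΦ pt hpt hk).2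
end AlmostAdditivePaper
end

section
/- Let X and Y be metric spaces and χ : X → Y a surjective map with the following property: there is a function N : (0,∞) → ℕ with log N(r)/log r → 0 as r → 0, such that for every r > 0 the preimage χ^{−1}(B) of any ball B of radius r in Y can be covered by at most N(r) subsets of X each of diameter less than r. Then for every set E ⊂ Y, dim_H E ≥ dim_H χ^{−1}(E). -/
open Filter Topology MeasureTheory Set
open scoped ENNReal NNReal

namespace AlmostAdditivePaper

variable {m : ℕ}

variable {E : Type*} [NormedAddCommGroup E] [NormedSpace ℝ E]

/-- Auxiliary lemma for Statement 17: if `μH^s E = 0` and `s < t`, then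
`μH^t (χ⁻¹ E) = 0`, under the covering hypothesis. -/
lemma aux17 {X Y : Type*} [MetricSpace X] [MetricSpace Y]
    [MeasurableSpace X] [BorelSpace X] [MeasurableSpace Y] [BorelSpace Y]
    (χ : X → Y) (N : ℝ → ℕ)
    (hN : Tendsto (fun r : ℝ => Real.log (N r) / Real.log r) (𝓝[>] (0 : ℝ)) (𝓝 0))
    (hcov : ∀ r : ℝ, 0 < r → ∀ y : Y, ∃ U : Fin (N r) → Set X,
      χ ⁻¹' (Metric.ball y r) ⊆ ⋃ i, U i ∧ ∀ i, EMetric.diam (U i) < ENNReal.ofReal r)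
    (S : Set Y) (s t : ℝ≥0) (hs0 : 0 < s) (hst : s < t)
    (hS : μH[(s : ℝ)] S = 0) : μH[(t : ℝ)] (χ ⁻¹' S) = 0 := by
  have hs0' : (0 : ℝ) < (s : ℝ) := by exact_mod_cast hs0
  have ht0 : (0 : ℝ) < (t : ℝ) := by exact_mod_cast hs0.trans hst
  have hε : (0 : ℝ) < (t : ℝ) - (s : ℝ) := sub_pos.mpr (by exact_mod_cast hst)
  -- Step 1: extract a quantitative bound `N ρ ≤ ρ ^ (-(t-s))` for small `ρ`.
  obtain ⟨r₀, hr₀0, hr₀1, hNb⟩ :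
      ∃ r₀ : ℝ, 0 < r₀ ∧ r₀ ≤ 1 ∧ ∀ ρ : ℝ, 0 < ρ → ρ < r₀ →
        (N ρ : ℝ≥0∞) ≤ (ENNReal.ofReal ρ) ^ (-((t : ℝ) - (s : ℝ))) := by
    have h1 : ∀ᶠ r in 𝓝[>] (0 : ℝ),
        |Real.log (N r) / Real.log r| < (t : ℝ) - (s : ℝ) := by
      have := Metric.tendsto_nhds.mp hN _ hε
      simpa only [Real.dist_eq, sub_zero] using this
    rw [eventually_nhdsWithin_iff] at h1
    obtain ⟨δ₀, hδ₀, h2⟩ := Metric.eventually_nhds_iff.mp h1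
    refine ⟨min δ₀ 1, lt_min hδ₀ one_pos, min_le_right _ _, ?_⟩
    intro ρ hρ hρlt
    have hρ1 : ρ < 1 := lt_of_lt_of_le hρlt (min_le_right _ _)
    have hρδ₀ : dist ρ 0 < δ₀ := by
      rw [Real.dist_eq, sub_zero, abs_of_pos hρ]
      exact lt_of_lt_of_le hρlt (min_le_left _ _)
    have habs : |Real.log (N ρ) / Real.log ρ| < (t : ℝ) - (s : ℝ) := h2 hρδ₀ hρ
    have hlogρ : Real.log ρ < 0 := Real.log_neg hρ hρ1
    have hreal : (N ρ : ℝ) ≤ ρ ^ (-((t : ℝ) - (s : ℝ))) := by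
      rcases Nat.eq_zero_or_pos (N ρ) with h0 | hpos
      · rw [h0]
        exact_mod_cast (Real.rpow_pos_of_pos hρ _).le
      · have hN1 : (1 : ℝ) ≤ (N ρ : ℝ) := by exact_mod_cast hpos
        have hL : Real.log (N ρ) < -((t : ℝ) - (s : ℝ)) * Real.log ρ := by
          have h3 := (abs_lt.mp habs).1
          have h4 := mul_lt_mul_of_neg_right h3 hlogρ
          rwa [div_mul_cancel₀ _ (ne_of_lt hlogρ)] at h4
        have hexp : (N ρ : ℝ) = Real.exp (Real.log (N ρ)) :=
          (Real.exp_log (by linarith)).symm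
        rw [hexp, Real.rpow_def_of_pos hρ]
        exact (Real.exp_le_exp.mpr (by nlinarith [hL])).trans_eq rfl
    have h5 := ENNReal.ofReal_le_ofReal hreal
    rwa [ENNReal.ofReal_natCast, ← ENNReal.ofReal_rpow_of_pos hρ] at h5
  -- Step 2: for every budget `c` and fineness `r'`, there is a countable cover of
  -- `χ ⁻¹' S` of fineness `r'` whose `t`-sum is at most `c`.
  have hCover : ∀ c : ℝ≥0∞, c ≠ 0 → c ≠ ⊤ → ∀ r' : ℝ, 0 < r' →
      ∃ V : ℕ → Set X, (χ ⁻¹' S ⊆ ⋃ k, V k) ∧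
        (∀ k, EMetric.diam (V k) ≤ ENNReal.ofReal r') ∧
        ∑' k, EMetric.diam (V k) ^ (t : ℝ) ≤ c := by
    intro c hc0 hcT r' hr'
    have h2s_ne_top : (2 : ℝ≥0∞) ^ (s : ℝ) ≠ ⊤ :=
      ENNReal.rpow_ne_top_of_nonneg hs0'.le (by simp)
    set q : ℝ≥0∞ := (ENNReal.ofReal (1/2 : ℝ)) ^ (s : ℝ) with hqdef
    have hq1 : q < 1 :=
      ENNReal.rpow_lt_one (ENNReal.ofReal_lt_one.mpr (by norm_num)) hs0'
    set K : ℝ≥0∞ := (1 - q)⁻¹ with hKdef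
    have hK0 : K ≠ 0 := ENNReal.inv_ne_zero.mpr
      (ne_top_of_le_ne_top ENNReal.one_ne_top tsub_le_self)
    have hKT : K ≠ ⊤ := ENNReal.inv_ne_top.mpr
      (by simpa [pos_iff_ne_zero] using tsub_pos_of_lt hq1)
    have hc2 : c / 2 ≠ 0 :=
      ne_of_gt (ENNReal.div_pos hc0 (by norm_num))
    set a : ℝ≥0∞ := min 1 (c / 2 / K) with hadef
    have ha0 : a ≠ 0 := ne_of_gt (lt_min one_pos (ENNReal.div_pos hc2 hKT))
    have haT : a ≤ 1 := min_le_left _ _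
    set x : ℝ≥0∞ := a ^ (1 / (s : ℝ)) with hxdef
    have hx1 : x ≤ 1 := by
      calc x ≤ 1 ^ (1 / (s : ℝ)) :=
            ENNReal.rpow_le_rpow haT (by positivity)
        _ = 1 := ENNReal.one_rpow _
    have hxT : x ≠ ⊤ := ne_top_of_le_ne_top ENNReal.one_ne_top hx1
    have hx0 : x ≠ 0 := ne_of_gt (ENNReal.rpow_pos
      (pos_iff_ne_zero.mpr ha0) (ne_top_of_le_ne_top ENNReal.one_ne_top haT))
    have hxs : x ^ (s : ℝ) = a := by
      rw [hxdef, ← ENNReal.rpow_mul, one_div_mul_cancel (ne_of_gt hs0'),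
        ENNReal.rpow_one]
    set δ : ℝ := min r' r₀ / 3 with hδdef
    have hmin : 0 < min r' r₀ := lt_min hr' hr₀0
    have hδ0 : 0 < δ := by positivity
    set η₂ : ℝ := min x.toReal δ with hη₂def
    have hη₂0 : 0 < η₂ := lt_min (ENNReal.toReal_pos hx0 hxT) hδ0
    have hη₂x : ENNReal.ofReal η₂ ≤ x := by
      calc ENNReal.ofReal η₂ ≤ ENNReal.ofReal x.toReal :=
            ENNReal.ofReal_le_ofReal (min_le_left _ _)
        _ = x := ENNReal.ofReal_toReal hxT
    set η : ℝ≥0∞ := c / 2 / (2 : ℝ≥0∞) ^ (s : ℝ) with hηdef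
    have hη0 : 0 < η := ENNReal.div_pos hc2 h2s_ne_top
    -- extract a cover of `S` from `μH[s] S = 0`
    have h0 := hS
    rw [MeasureTheory.Measure.hausdorffMeasure_apply] at h0
    have hlt : (⨅ (u : ℕ → Set Y) (_ : S ⊆ ⋃ n, u n)
        (_ : ∀ n, EMetric.diam (u n) ≤ ENNReal.ofReal δ),
        ∑' n, ⨆ _ : (u n).Nonempty, EMetric.diam (u n) ^ (s : ℝ)) < η := by
      refine lt_of_le_of_lt (le_trans ?_ h0.le) hη0
      exact le_iSup₂ (f := fun (r : ℝ≥0∞) (_ : 0 < r) =>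
        ⨅ (u : ℕ → Set Y) (_ : S ⊆ ⋃ n, u n)
          (_ : ∀ n, EMetric.diam (u n) ≤ r),
          ∑' n, ⨆ _ : (u n).Nonempty, EMetric.diam (u n) ^ (s : ℝ))
        (ENNReal.ofReal δ) (ENNReal.ofReal_pos.mpr hδ0)
    simp only [iInf_lt_iff] at hlt
    obtain ⟨u, hu1, hu2, hu3⟩ := hlt
    -- per-piece covers
    have key : ∀ n : ℕ, ∃ W : ℕ → Set X,
        χ ⁻¹' (u n) ⊆ ⋃ i, W i ∧ (∀ i, EMetric.diam (W i) ≤ ENNReal.ofReal r') ∧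
        ∑' i, EMetric.diam (W i) ^ (t : ℝ) ≤
          (2 : ℝ≥0∞) ^ (s : ℝ) * (⨆ _ : (u n).Nonempty, EMetric.diam (u n) ^ (s : ℝ)) +
            (ENNReal.ofReal η₂ * (ENNReal.ofReal (1/2 : ℝ)) ^ n) ^ (s : ℝ) := by
      intro n
      by_cases hne : (u n).Nonempty
      · have hdT : EMetric.diam (u n) ≠ ⊤ :=
          ne_top_of_le_ne_top ENNReal.ofReal_ne_top (hu2 n)
        have hdδ : (EMetric.diam (u n)).toReal ≤ δ :=
          ENNReal.toReal_le_of_le_ofReal hδ0.le (hu2 n)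
        set ρ : ℝ := if EMetric.diam (u n) = 0 then η₂ * (1/2 : ℝ) ^ n
          else 2 * (EMetric.diam (u n)).toReal with hρdef
        have hρ0 : 0 < ρ := by
          rw [hρdef]; split
          · positivity
          · next h => exact mul_pos two_pos (ENNReal.toReal_pos h hdT)
        have hρle : ρ ≤ 2 * δ := by
          rw [hρdef]; split
          · have h1 : η₂ * (1/2 : ℝ) ^ n ≤ η₂ * 1 :=
              mul_le_mul_of_nonneg_left (by
                calc ((1:ℝ)/2) ^ n ≤ 1 ^ n :=
                      pow_le_pow_left₀ (by norm_num) (by norm_num) n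
                  _ = 1 := one_pow n) hη₂0.le
            have h2 : η₂ ≤ δ := min_le_right _ _
            nlinarith [hδ0]
          · nlinarith [hdδ]
        have h2δ : 2 * δ < min r' r₀ := by rw [hδdef]; linarith
        have hρmin : ρ < min r' r₀ := lt_of_le_of_lt hρle h2δ
        have hρr₀ : ρ < r₀ := lt_of_lt_of_le hρmin (min_le_right _ _)
        have hρr' : ρ ≤ r' := (lt_of_lt_of_le hρmin (min_le_left _ _)).le
        have hdρ : EMetric.diam (u n) < ENNReal.ofReal ρ := by
          rw [hρdef]; split
          · next h => rw [h]; exact ENNReal.ofReal_pos.mpr (by positivity)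
          · next h =>
              have heq : ENNReal.ofReal (2 * (EMetric.diam (u n)).toReal) =
                  2 * EMetric.diam (u n) := by
                rw [ENNReal.ofReal_mul (by norm_num), ENNReal.ofReal_ofNat,
                  ENNReal.ofReal_toReal hdT]
              rw [heq, two_mul]
              exact ENNReal.lt_add_right hdT h
        obtain ⟨y, hy⟩ := hne
        have hball : u n ⊆ Metric.ball y ρ := by
          intro z hz
          rw [Metric.mem_ball, dist_comm]
          exact edist_lt_ofReal.mp
            ((EMetric.edist_le_diam_of_mem hy hz).trans_lt hdρ)
        obtain ⟨U, hUc, hUd⟩ := hcov ρ hρ0 y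
        refine ⟨fun i => if h : i < N ρ then U ⟨i, h⟩ else ∅, ?_, ?_, ?_⟩
        · intro z hz
          have hz2 : z ∈ ⋃ i, U i := hUc (Set.preimage_mono hball hz)
          obtain ⟨i, hi⟩ := Set.mem_iUnion.mp hz2
          exact Set.mem_iUnion.mpr ⟨i.1, by simp only [i.isLt, dif_pos, Fin.eta]; exact hi⟩
        · intro i
          by_cases h : i < N ρ
          · simp only [dif_pos h]
            exact (hUd _).le.trans (ENNReal.ofReal_le_ofReal hρr')
          · simp only [dif_neg h]; simp [EMetric.diam]
        · have hWd : ∀ i : ℕ, EMetric.diam (if h : i < N ρ then U ⟨i, h⟩ else ∅) ≤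
              ENNReal.ofReal ρ := by
            intro i
            by_cases h : i < N ρ
            · rw [dif_pos h]; exact (hUd _).le
            · rw [dif_neg h]; simp [EMetric.diam]
          have hzero : ∀ i ∉ Finset.range (N ρ),
              EMetric.diam (if h : i < N ρ then U ⟨i, h⟩ else ∅) ^ (t : ℝ) = 0 := by
            intro i hi
            rw [dif_neg (by simpa using hi)]
            simp [EMetric.diam, ENNReal.zero_rpow_of_pos ht0]
          calc ∑' i, EMetric.diam (if h : i < N ρ then U ⟨i, h⟩ else ∅) ^ (t : ℝ)
              = ∑ i ∈ Finset.range (N ρ),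
                  EMetric.diam (if h : i < N ρ then U ⟨i, h⟩ else ∅) ^ (t : ℝ) :=
                tsum_eq_sum hzero
            _ ≤ (Finset.range (N ρ)).card • (ENNReal.ofReal ρ) ^ (t : ℝ) :=
                Finset.sum_le_card_nsmul _ _ _
                  (fun i _ => ENNReal.rpow_le_rpow (hWd i) ht0.le)
            _ = (N ρ : ℝ≥0∞) * (ENNReal.ofReal ρ) ^ (t : ℝ) := by
                rw [Finset.card_range, nsmul_eq_mul]
            _ ≤ (ENNReal.ofReal ρ) ^ (-((t : ℝ) - (s : ℝ))) *
                  (ENNReal.ofReal ρ) ^ (t : ℝ) :=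
                mul_le_mul_left (hNb ρ hρ0 hρr₀) _
            _ = (ENNReal.ofReal ρ) ^ (s : ℝ) := by
                rw [← ENNReal.rpow_add _ _
                  (ne_of_gt (ENNReal.ofReal_pos.mpr hρ0)) ENNReal.ofReal_ne_top]
                norm_num
            _ ≤ (2 : ℝ≥0∞) ^ (s : ℝ) *
                  (⨆ _ : (u n).Nonempty, EMetric.diam (u n) ^ (s : ℝ)) +
                  (ENNReal.ofReal η₂ * (ENNReal.ofReal (1/2 : ℝ)) ^ n) ^ (s : ℝ) := by
                rw [iSup_pos ⟨y, hy⟩]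
                by_cases hd0 : EMetric.diam (u n) = 0
                · rw [hρdef, if_pos hd0, ENNReal.ofReal_mul hη₂0.le,
                    ENNReal.ofReal_pow (by norm_num)]
                  exact le_add_self
                · rw [hρdef, if_neg hd0, ENNReal.ofReal_mul (by norm_num : (0:ℝ) ≤ 2),
                    ENNReal.ofReal_ofNat, ENNReal.ofReal_toReal hdT,
                    ENNReal.mul_rpow_of_nonneg _ _ hs0'.le]
                  exact self_le_add_right _ _
      · have hempty : u n = ∅ := Set.not_nonempty_iff_eq_empty.mp hne
        refine ⟨fun _ => ∅, by simp [hempty], by simp [EMetric.diam], ?_⟩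
        have : ∀ i : ℕ, EMetric.diam (∅ : Set X) ^ (t : ℝ) = 0 := by
          simp [EMetric.diam, ENNReal.zero_rpow_of_pos ht0]
        rw [tsum_congr this, tsum_zero]
        exact zero_le
    choose W hW1 hW2 hW3 using key
    set e : ℕ × ℕ ≃ ℕ := Denumerable.eqv (ℕ × ℕ) with hedef
    refine ⟨fun k => W (e.symm k).1 (e.symm k).2, ?_, fun k => hW2 _ _, ?_⟩
    · intro z hz
      obtain ⟨n, hn⟩ := Set.mem_iUnion.mp (hu1 hz)
      obtain ⟨i, hi⟩ := Set.mem_iUnion.mp (hW1 n hn)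
      exact Set.mem_iUnion.mpr ⟨e (n, i), by simpa using hi⟩
    · have hgeo : ∑' n : ℕ, (ENNReal.ofReal η₂ *
          (ENNReal.ofReal (1/2 : ℝ)) ^ n) ^ (s : ℝ) =
          (ENNReal.ofReal η₂) ^ (s : ℝ) * K := by
        have hcomm : ∀ n : ℕ, (ENNReal.ofReal η₂ *
            (ENNReal.ofReal (1/2 : ℝ)) ^ n) ^ (s : ℝ) =
            (ENNReal.ofReal η₂) ^ (s : ℝ) * q ^ n := by
          intro n
          rw [ENNReal.mul_rpow_of_nonneg _ _ hs0'.le]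
          congr 1
          rw [← ENNReal.rpow_natCast (ENNReal.ofReal (1/2 : ℝ)) n,
            ← ENNReal.rpow_mul, mul_comm, ENNReal.rpow_mul, ENNReal.rpow_natCast]
        rw [tsum_congr hcomm, ENNReal.tsum_mul_left, ENNReal.tsum_geometric]
      calc ∑' k, EMetric.diam (W (e.symm k).1 (e.symm k).2) ^ (t : ℝ)
          = ∑' p : ℕ × ℕ, EMetric.diam (W p.1 p.2) ^ (t : ℝ) :=
            Equiv.tsum_eq e.symm (fun p : ℕ × ℕ => EMetric.diam (W p.1 p.2) ^ (t : ℝ))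
        _ = ∑' n, ∑' i, EMetric.diam (W n i) ^ (t : ℝ) :=
            ENNReal.tsum_prod (f := fun n i => EMetric.diam (W n i) ^ (t : ℝ))
        _ ≤ ∑' n, ((2 : ℝ≥0∞) ^ (s : ℝ) *
              (⨆ _ : (u n).Nonempty, EMetric.diam (u n) ^ (s : ℝ)) +
              (ENNReal.ofReal η₂ * (ENNReal.ofReal (1/2 : ℝ)) ^ n) ^ (s : ℝ)) :=
            ENNReal.tsum_le_tsum hW3
        _ = (2 : ℝ≥0∞) ^ (s : ℝ) *
              (∑' n, ⨆ _ : (u n).Nonempty, EMetric.diam (u n) ^ (s : ℝ)) +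
              ∑' n : ℕ, (ENNReal.ofReal η₂ *
                (ENNReal.ofReal (1/2 : ℝ)) ^ n) ^ (s : ℝ) := by
            rw [ENNReal.tsum_add, ENNReal.tsum_mul_left]
        _ ≤ (2 : ℝ≥0∞) ^ (s : ℝ) * η + x ^ (s : ℝ) * K := by
            rw [hgeo]
            exact add_le_add (mul_le_mul_right hu3.le _)
              (mul_le_mul_left (ENNReal.rpow_le_rpow hη₂x hs0'.le) _)
        _ ≤ c / 2 + c / 2 := by
            refine add_le_add ?_ ?_
            · rw [hηdef]; exact ENNReal.mul_div_le
            · rw [hxs]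
              calc a * K ≤ c / 2 / K * K := mul_le_mul_left (min_le_right _ _) K
                _ = c / 2 := ENNReal.div_mul_cancel hK0 hKT
        _ = c := ENNReal.add_halves c
  -- Step 3: conclude via a sequence of covers.
  have hVn := fun n : ℕ => hCover (ENNReal.ofReal ((1/2 : ℝ) ^ n))
    (ne_of_gt (ENNReal.ofReal_pos.mpr (by positivity))) ENNReal.ofReal_ne_top
    ((1/2 : ℝ) ^ n) (by positivity)
  choose V hV1 hV2 hV3 using hVn
  have htend : Tendsto (fun n : ℕ => ENNReal.ofReal ((1/2 : ℝ) ^ n)) atTop (𝓝 0) := by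
    have h := ENNReal.tendsto_ofReal
      (tendsto_pow_atTop_nhds_zero_of_lt_one (by norm_num : (0:ℝ) ≤ 1/2)
        (by norm_num : (1:ℝ)/2 < 1))
    simpa using h
  have hmeas := MeasureTheory.Measure.hausdorffMeasure_le_liminf_tsum (t : ℝ) (χ ⁻¹' S)
    (fun n : ℕ => ENNReal.ofReal ((1/2 : ℝ) ^ n)) htend V
    (Eventually.of_forall fun n => hV2 n) (Eventually.of_forall hV1)
  refine le_antisymm (hmeas.trans ?_) (zero_le)
  have hlim : liminf (fun n : ℕ => ∑' i, EMetric.diam (V n i) ^ (t : ℝ)) atTop ≤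
      liminf (fun n : ℕ => ENNReal.ofReal ((1/2 : ℝ) ^ n)) atTop :=
    liminf_le_liminf (Eventually.of_forall hV3)
  rw [htend.liminf_eq] at hlim
  exact hlim

/-- If `χ : X → Y` is surjective and the preimage of every `r`-ball
of `Y` can be covered by `N(r)` sets of diameter `< r`, with `log N(r)/log r → 0` as
`r → 0⁺`, then `dim_H E ≥ dim_H χ⁻¹(E)` for every `E ⊆ Y`. -/
theorem statement17 {X Y : Type*} [MetricSpace X] [MetricSpace Y]
    [MeasurableSpace X] [BorelSpace X] [MeasurableSpace Y] [BorelSpace Y]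
    (χ : X → Y) (hχ : Function.Surjective χ) (N : ℝ → ℕ)
    (hN : Tendsto (fun r : ℝ => Real.log (N r) / Real.log r) (𝓝[>] (0 : ℝ)) (𝓝 0))
    (hcov : ∀ r : ℝ, 0 < r → ∀ y : Y, ∃ U : Fin (N r) → Set X,
      χ ⁻¹' (Metric.ball y r) ⊆ ⋃ i, U i ∧ ∀ i, EMetric.diam (U i) < ENNReal.ofReal r) :
    ∀ E : Set Y, dimH (χ ⁻¹' E) ≤ dimH E := by
  intro E
  by_contra hlt
  push_neg at hlt
  obtain ⟨s, hs1, hs2⟩ := ENNReal.lt_iff_exists_nnreal_btwn.mp hlt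
  obtain ⟨t, ht1, ht2⟩ := ENNReal.lt_iff_exists_nnreal_btwn.mp hs2
  have hs0 : 0 < s := by
    have : (0 : ℝ≥0∞) < (s : ℝ≥0∞) := lt_of_le_of_lt (zero_le) hs1
    exact_mod_cast this
  have hst : s < t := by exact_mod_cast ht1
  have hE0 : μH[(s : ℝ)] E = 0 := hausdorffMeasure_of_dimH_lt hs1
  have hmain : μH[(t : ℝ)] (χ ⁻¹' E) = 0 := aux17 χ N hN hcov E s t hs0 hst hE0
  have hle : dimH (χ ⁻¹' E) ≤ (t : ℝ≥0∞) :=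
    dimH_le_of_hausdorffMeasure_ne_top (by rw [hmain]; exact ENNReal.zero_ne_top)
  exact absurd ht2 (not_lt.mpr hle)

end AlmostAdditivePaper
end
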